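/- arXiv:0810.3021 — 5 statements merged into one kernel-verified Lean document; each statement's English description precedes it below -/
import Mathlib

section
/- A Hausdorff topological space X is k*-metrizable if and only if X is cs*-metrizable and every compact subset of X is sequentially compact. Likewise, X is k-metrizable if and only if X is cs-metrizable and every compact subset of X is sequentially compact. -/
open Filter Topology Set

universe u

/-- A function `s : Y → X` is cs*-continuous if for every convergent sequence `(y n)` in `Y`
the image sequence `(s (y n))` has an accumulation (cluster) point in `X`. -/
def CsStarContinuous {X Y : Type u} [TopologicalSpace X] [TopologicalSpace Y]
    (s : Y → X) : Prop :=
  ∀ (y : ℕ → Y) (a : Y), Tendsto y atTop (𝓝 a) →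
    ∃ x : X, MapClusterPt x atTop (fun n => s (y n))

/-- A Hausdorff space `X` is k*-metrizable if it is the image of a metrizable space `M`
under a continuous surjection admitting a section which preserves precompact sets. -/
def KStarMetrizable (X : Type u) [TopologicalSpace X] : Prop :=
  ∃ (M : Type u) (_ : MetricSpace M) (f : M → X) (s : X → M),
    Continuous f ∧ Function.Surjective f ∧ (∀ x, f (s x) = x) ∧
    ∀ K : Set X, IsCompact K → IsCompact (closure (s '' K))

/-- A Hausdorff space `X` is cs*-metrizable if it is the image of a metrizable space
under a continuous surjection admitting a cs*-continuous section. -/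
def CsStarMetrizable (X : Type u) [TopologicalSpace X] : Prop :=
  ∃ (M : Type u) (_ : MetricSpace M) (f : M → X) (s : X → M),
    Continuous f ∧ Function.Surjective f ∧ (∀ x, f (s x) = x) ∧
    CsStarContinuous s

/-- A Hausdorff space `X` is cs-metrizable if it is the image of a metrizable space
under a continuous surjection admitting a sequentially continuous section. -/
def CsMetrizable (X : Type u) [TopologicalSpace X] : Prop :=
  ∃ (M : Type u) (_ : MetricSpace M) (f : M → X) (s : X → M),
    Continuous f ∧ Function.Surjective f ∧ (∀ x, f (s x) = x) ∧
    ∀ (x : ℕ → X) (a : X), Tendsto x atTop (𝓝 a) →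
      ∃ m : M, Tendsto (fun n => s (x n)) atTop (𝓝 m)

/-- A Hausdorff space `X` is k-metrizable if it is the image of a metrizable space
under a continuous surjection for which preimages of compact sets are compact. -/
def KMetrizable (X : Type u) [TopologicalSpace X] : Prop :=
  ∃ (M : Type u) (_ : MetricSpace M) (f : M → X),
    Continuous f ∧ Function.Surjective f ∧
    ∀ K : Set X, IsCompact K → IsCompact (f ⁻¹' K)

section Helpers

variable {X : Type u} [TopologicalSpace X] [T2Space X]
variable {M : Type u} [MetricSpace M]

/-- interleaving a convergent sequence with its limit still converges -/
lemma tendsto_interleave {x : ℕ → X} {a : X} (hx : Tendsto x atTop (𝓝 a)) :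
    Tendsto (fun n => if n % 2 = 0 then x (n / 2) else a) atTop (𝓝 a) := by
  intro U hU
  have h1 : ∀ᶠ k in atTop, x k ∈ U := hx hU
  obtain ⟨N, hN⟩ := eventually_atTop.1 h1
  rw [mem_map, mem_atTop_sets]
  refine ⟨2 * N, fun n hn => ?_⟩
  by_cases h : n % 2 = 0
  · simp only [mem_preimage, h, if_true]
    exact hN _ (by omega)
  · simp only [mem_preimage, h, if_false]
    exact mem_of_mem_nhds hU

/-- a sequentially-convergence-preserving section automatically sends `x n → a`
to `s (x n) → s a`. -/
lemma cs_section_tendsto {f : M → X} {s : X → M}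
    (hsec : ∀ x, f (s x) = x)
    (hcs : ∀ (x : ℕ → X) (a : X), Tendsto x atTop (𝓝 a) →
      ∃ m : M, Tendsto (fun n => s (x n)) atTop (𝓝 m))
    {x : ℕ → X} {a : X} (hx : Tendsto x atTop (𝓝 a)) :
    Tendsto (fun n => s (x n)) atTop (𝓝 (s a)) := by
  set z : ℕ → X := fun n => if n % 2 = 0 then x (n / 2) else a with hz
  obtain ⟨m, hm⟩ := hcs z a (tendsto_interleave hx)
  have hmono_odd : StrictMono (fun k : ℕ => 2 * k + 1) := by
    intro i j hij; simp only []; omega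
  have hodd : Tendsto (fun k => s (z (2 * k + 1))) atTop (𝓝 m) :=
    hm.comp hmono_odd.tendsto_atTop
  have hzodd : (fun k => s (z (2 * k + 1))) = fun _ => s a := by
    funext k
    have : (2 * k + 1) % 2 = 1 := by omega
    simp [hz, this]
  rw [hzodd] at hodd
  have hma : m = s a := tendsto_nhds_unique hodd tendsto_const_nhds
  have hmono_even : StrictMono (fun k : ℕ => 2 * k) := by
    intro i j hij; simp only []; omega
  have heven : Tendsto (fun k => s (z (2 * k))) atTop (𝓝 m) :=
    hm.comp hmono_even.tendsto_atTop
  have hzeven : (fun k => s (z (2 * k))) = fun k => s (x k) := by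
    funext k
    have h2 : (2 * k) % 2 = 0 := by omega
    have h3 : (2 * k) / 2 = k := by omega
    simp [hz, h2, h3]
  rwa [hzeven, hma] at heven

end Helpers

section Implications

variable {X : Type u} [TopologicalSpace X] [T2Space X]
variable {M : Type u} [MetricSpace M]

/-- From a k*-witness, every compact set is sequentially compact. -/
lemma seq_of_kstar {f : M → X} {s : X → M}
    (hf : Continuous f) (hsec : ∀ x, f (s x) = x)
    (hK : ∀ K : Set X, IsCompact K → IsCompact (closure (s '' K)))
    {K : Set X} (hKc : IsCompact K) : IsSeqCompact K := by
  intro x hx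
  have hmem : ∀ n, s (x n) ∈ closure (s '' K) := fun n =>
    subset_closure ⟨x n, hx n, rfl⟩
  obtain ⟨c, -, φ, hφ, hconv⟩ := (hK K hKc).tendsto_subseq hmem
  have hxφ : Tendsto (x ∘ φ) atTop (𝓝 (f c)) := by
    have : (x ∘ φ) = fun j => f (s (x (φ j))) := by
      funext j; simp only [Function.comp_apply, hsec]
    rw [this]
    exact (hf.tendsto c).comp hconv
  have hfc : f c ∈ K := by
    have hev : ∀ᶠ j in atTop, (x ∘ φ) j ∈ K := Eventually.of_forall fun j => hx (φ j)
    exact hKc.isClosed.mem_of_tendsto hxφ hev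
  exact ⟨f c, hfc, φ, hφ, hxφ⟩

/-- From a k*-witness, the section is cs*-continuous. -/
lemma csstar_of_kstar {f : M → X} {s : X → M}
    (hK : ∀ K : Set X, IsCompact K → IsCompact (closure (s '' K)))
    : CsStarContinuous s := by
  intro y a hy
  have hKc : IsCompact (insert a (range y)) := hy.isCompact_insert_range
  have hmem : ∀ n, s (y n) ∈ closure (s '' insert a (range y)) := fun n =>
    subset_closure ⟨y n, Or.inr ⟨n, rfl⟩, rfl⟩
  obtain ⟨c, -, φ, hφ, hconv⟩ := (hK _ hKc).tendsto_subseq hmem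
  exact ⟨c, MapClusterPt.of_comp hφ.tendsto_atTop hconv.mapClusterPt⟩

/-- From a cs*-witness plus sequential compactness of compacta,
`closure (s '' K)` is compact for every compact `K`. -/
lemma kstar_of_csstar {f : M → X} {s : X → M}
    (hcs : CsStarContinuous s)
    (hseq : ∀ K : Set X, IsCompact K → IsSeqCompact K)
    {K : Set X} (hKc : IsCompact K) : IsCompact (closure (s '' K)) := by
  refine IsSeqCompact.isCompact ?_
  intro z hz
  -- approximate each z n by a point of s '' K
  have happrox : ∀ n : ℕ, ∃ x ∈ K, dist (z n) (s x) < 1 / (n + 1) := by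
    intro n
    have hpos : (0 : ℝ) < 1 / (n + 1) := by positivity
    obtain ⟨b, hb, hdist⟩ := Metric.mem_closure_iff.1 (hz n) _ hpos
    obtain ⟨x, hxK, rfl⟩ := hb
    exact ⟨x, hxK, hdist⟩
  choose x hxK hxdist using happrox
  obtain ⟨a, haK, φ, hφ, hxa⟩ := hseq K hKc hxK
  obtain ⟨c, hc⟩ := hcs (fun j => x (φ j)) a hxa
  obtain ⟨ψ, hψ, hconv⟩ := TopologicalSpace.FirstCountableTopology.tendsto_subseq hc
  have hcmem : c ∈ closure (s '' K) := by
    refine mem_closure_of_tendsto hconv ?_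
    exact Eventually.of_forall fun j => ⟨x (φ (ψ j)), hxK _, rfl⟩
  refine ⟨c, hcmem, φ ∘ ψ, hφ.comp hψ, ?_⟩
  -- z (φ (ψ j)) → c by squeezing
  have hdist0 : Tendsto (fun j => dist (z ((φ ∘ ψ) j)) c) atTop (𝓝 0) := by
    have hle : ∀ j, dist (z ((φ ∘ ψ) j)) c ≤
        1 / ((φ ∘ ψ) j + 1) + dist (s (x (φ (ψ j)))) c := by
      intro j
      calc dist (z ((φ ∘ ψ) j)) c
          ≤ dist (z ((φ ∘ ψ) j)) (s (x (φ (ψ j)))) + dist (s (x (φ (ψ j)))) c :=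
            dist_triangle _ _ _
        _ ≤ 1 / ((φ ∘ ψ) j + 1) + dist (s (x (φ (ψ j)))) c := by
            have := hxdist ((φ ∘ ψ) j)
            simp only [Function.comp_apply]
            exact add_le_add (le_of_lt (hxdist _)) le_rfl
    have h1 : Tendsto (fun j => 1 / (((φ ∘ ψ) j : ℝ) + 1)) atTop (𝓝 0) := by
      apply Tendsto.comp (tendsto_one_div_add_atTop_nhds_zero_nat)
      exact (hφ.comp hψ).tendsto_atTop
    have h2 : Tendsto (fun j => dist (s (x (φ (ψ j)))) c) atTop (𝓝 0) := by
      rw [tendsto_iff_dist_tendsto_zero] at hconv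
      exact hconv
    have hsum : Tendsto (fun j => 1 / (((φ ∘ ψ) j : ℝ) + 1) +
        dist (s (x (φ (ψ j)))) c) atTop (𝓝 0) := by
      simpa using h1.add h2
    refine squeeze_zero (fun j => dist_nonneg) ?_ hsum
    intro j
    exact_mod_cast hle j
  rw [tendsto_iff_dist_tendsto_zero]
  exact hdist0

end Implications

section Part2

variable {X : Type u} [TopologicalSpace X] [T2Space X]
variable {M : Type u} [MetricSpace M]

/-- From a k-witness, every compact set is sequentially compact. -/
lemma seq_of_k {f : M → X}
    (hf : Continuous f) (hfs : Function.Surjective f)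
    (hK : ∀ K : Set X, IsCompact K → IsCompact (f ⁻¹' K))
    {K : Set X} (hKc : IsCompact K) : IsSeqCompact K := by
  intro x hx
  have hm : ∀ n, ∃ m : M, f m = x n := fun n => hfs (x n)
  choose m hmf using hm
  have hmem : ∀ n, m n ∈ f ⁻¹' K := fun n => by
    simp only [mem_preimage, hmf]; exact hx n
  obtain ⟨c, hc, φ, hφ, hconv⟩ := (hK K hKc).tendsto_subseq hmem
  have hxφ : Tendsto (x ∘ φ) atTop (𝓝 (f c)) := by
    have : (x ∘ φ) = fun j => f (m (φ j)) := by
      funext j; simp only [Function.comp_apply, hmf]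
    rw [this]
    exact (hf.tendsto c).comp hconv
  exact ⟨f c, hc, φ, hφ, hxφ⟩

/-- From a cs-witness plus sequential compactness of compacta: `s '' K` is compact. -/
lemma image_compact_of_cs {f : M → X} {s : X → M}
    (hsec : ∀ x, f (s x) = x)
    (hcs : ∀ (x : ℕ → X) (a : X), Tendsto x atTop (𝓝 a) →
      ∃ m : M, Tendsto (fun n => s (x n)) atTop (𝓝 m))
    (hseq : ∀ K : Set X, IsCompact K → IsSeqCompact K)
    {K : Set X} (hKc : IsCompact K) : IsCompact (s '' K) := by
  refine IsSeqCompact.isCompact ?_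
  intro z hz
  have hxex : ∀ n : ℕ, ∃ x ∈ K, s x = z n := fun n => hz n
  choose x hxK hxz using hxex
  obtain ⟨a, haK, φ, hφ, hxa⟩ := hseq K hKc hxK
  have hconv : Tendsto (fun j => s (x (φ j))) atTop (𝓝 (s a)) :=
    cs_section_tendsto hsec hcs hxa
  refine ⟨s a, ⟨a, haK, rfl⟩, φ, hφ, ?_⟩
  have : (z ∘ φ) = fun j => s (x (φ j)) := by
    funext j; simp only [Function.comp_apply, hxz]
  rw [this]
  exact hconv

/-- cs-metrizable + sequentially compact compacta ⟹ k-metrizable witness. -/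
lemma k_of_cs {f : M → X} {s : X → M}
    (hf : Continuous f) (hsec : ∀ x, f (s x) = x)
    (hcs : ∀ (x : ℕ → X) (a : X), Tendsto x atTop (𝓝 a) →
      ∃ m : M, Tendsto (fun n => s (x n)) atTop (𝓝 m))
    (hseq : ∀ K : Set X, IsCompact K → IsSeqCompact K) :
    ∃ (N : Type u) (_ : MetricSpace N) (g : N → X),
      Continuous g ∧ Function.Surjective g ∧
      ∀ K : Set X, IsCompact K → IsCompact (g ⁻¹' K) := by
  refine ⟨{m : M // m ∈ range s}, inferInstance, fun m => f m.val, ?_, ?_, ?_⟩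
  · exact hf.comp continuous_subtype_val
  · intro x
    exact ⟨⟨s x, ⟨x, rfl⟩⟩, hsec x⟩
  · intro K hKc
    have hpre : (fun m : {m : M // m ∈ range s} => f m.val) ⁻¹' K
        = Subtype.val ⁻¹' (s '' K) := by
      ext m
      obtain ⟨x', hx'⟩ := m.2
      simp only [mem_preimage]
      constructor
      · intro hfm
        refine ⟨x', ?_, hx'⟩
        have : f m.val = x' := by rw [← hx', hsec]
        rwa [this] at hfm
      · rintro ⟨x'', hx''K, hx''⟩
        have : f m.val = x'' := by rw [← hx'', hsec]
        rwa [this]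
    rw [hpre]
    refine Topology.IsInducing.isCompact_preimage' Topology.IsInducing.subtypeVal
      (image_compact_of_cs hsec hcs hseq hKc) ?_
    rintro _ ⟨x', _, rfl⟩
    exact ⟨⟨s x', ⟨x', rfl⟩⟩, rfl⟩

end Part2

section MonsterDev

variable {X : Type u} [TopologicalSpace X] [T2Space X]
variable {M : Type u} [MetricSpace M]
variable {f : M → X}

/-- the saturated "ball": points whose whole fiber lies within distance `r` of the fiber of `w` -/
def satBall (f : M → X) (w : X) (r : ℝ) : Set X :=
  {y | f ⁻¹' {y} ⊆ {m | Metric.infDist m (f ⁻¹' {w}) < r}}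

lemma satBall_mono {w : X} {r r' : ℝ} (h : r ≤ r') : satBall f w r ⊆ satBall f w r' :=
  fun _ hy m hm => lt_of_lt_of_le (hy hm) h

lemma self_mem_satBall {w : X} {r : ℝ} (hr : 0 < r) : w ∈ satBall f w r := by
  intro m hm
  simp only [mem_preimage, mem_singleton_iff] at hm
  have : m ∈ f ⁻¹' {w} := hm
  simpa [Metric.infDist_zero_of_mem this] using hr

section SeqLemmas

variable (hf : Continuous f) (hfs : Function.Surjective f)
variable (hK : ∀ K : Set X, IsCompact K → IsCompact (f ⁻¹' K))

/-- helper : pick a point in each fiber within `infDist + 1/(k+1)` of a given point. -/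
lemma near_point_in_fiber (hfs : Function.Surjective f) (x : M) (w : X) (ε : ℝ) (hε : 0 < ε) :
    ∃ q, f q = w ∧ dist x q < Metric.infDist x (f ⁻¹' {w}) + ε := by
  have hfw : (f ⁻¹' {w}).Nonempty := hfs w
  have := (Metric.infDist_lt_iff (x := x) hfw).1
    (by linarith [Metric.infDist_nonneg (x := x) (s := f ⁻¹' {w})] :
      Metric.infDist x (f ⁻¹' {w}) < Metric.infDist x (f ⁻¹' {w}) + ε)
  obtain ⟨q, hq, hqd⟩ := this
  exact ⟨q, hq, hqd⟩

include hf hfs hK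

/-- LemA : if points `p k` in the fibers of `z k` approach the fiber of `w`,
then `z k → w`. -/
lemma tendsto_of_infDist_fiber {z : ℕ → X} {p : ℕ → M} {w : X}
    (hp : ∀ k, f (p k) = z k)
    (hd : Tendsto (fun k => Metric.infDist (p k) (f ⁻¹' {w})) atTop (𝓝 0)) :
    Tendsto z atTop (𝓝 w) := by
  have hfwc : IsCompact (f ⁻¹' {w}) := hK {w} isCompact_singleton
  refine tendsto_of_subseq_tendsto fun ns hns => ?_
  have hq : ∀ k : ℕ, ∃ q, f q = w ∧
      dist (p (ns k)) q < Metric.infDist (p (ns k)) (f ⁻¹' {w}) + 1 / (k + 1) :=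
    fun k => near_point_in_fiber hfs (p (ns k)) w _ (by positivity)
  choose q hqmem hqdist using hq
  have hqmem' : ∀ k, q k ∈ f ⁻¹' {w} := fun k => hqmem k
  obtain ⟨q', hq'mem, ms, hms, hqconv⟩ := hfwc.tendsto_subseq hqmem'
  refine ⟨ms, ?_⟩
  have hpconv : Tendsto (fun k => p (ns (ms k))) atTop (𝓝 q') := by
    rw [tendsto_iff_dist_tendsto_zero]
    have hle : ∀ k, dist (p (ns (ms k))) q' ≤
        (Metric.infDist (p (ns (ms k))) (f ⁻¹' {w}) + 1 / (ms k + 1)) + dist (q (ms k)) q' := by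
      intro k
      calc dist (p (ns (ms k))) q' ≤ dist (p (ns (ms k))) (q (ms k)) + dist (q (ms k)) q' :=
            dist_triangle _ _ _
        _ ≤ _ := add_le_add (le_of_lt (hqdist (ms k))) le_rfl
    have h1 : Tendsto (fun k => Metric.infDist (p (ns (ms k))) (f ⁻¹' {w})) atTop (𝓝 0) :=
      (hd.comp hns).comp hms.tendsto_atTop
    have h2 : Tendsto (fun k => (1 : ℝ) / (ms k + 1)) atTop (𝓝 0) :=
      tendsto_one_div_add_atTop_nhds_zero_nat.comp hms.tendsto_atTop
    have h3 : Tendsto (fun k => dist (q (ms k)) q') atTop (𝓝 0) := by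
      rw [← tendsto_iff_dist_tendsto_zero]
      exact hqconv
    have hsum : Tendsto (fun k =>
        (Metric.infDist (p (ns (ms k))) (f ⁻¹' {w}) + 1 / (ms k + 1)) + dist (q (ms k)) q')
        atTop (𝓝 0) := by
      have := (h1.add h2).add h3
      simpa using this
    exact squeeze_zero (fun k => dist_nonneg) hle hsum
  have : Tendsto (fun k => z (ns (ms k))) atTop (𝓝 (f q')) := by
    have : (fun k => z (ns (ms k))) = fun k => f (p (ns (ms k))) := by
      funext k; rw [hp]
    rw [this]
    exact (hf.tendsto q').comp hpconv
  rwa [show f q' = w by simpa using hq'mem] at this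

/-- LemB' : transfer of infDist along a convergent sequence. -/
lemma infDist_transfer {z : ℕ → X} {b : X} (hz : Tendsto z atTop (𝓝 b))
    {q : ℕ → M} (hd : Tendsto (fun k => Metric.infDist (q k) (f ⁻¹' {z k})) atTop (𝓝 0)) :
    Tendsto (fun k => Metric.infDist (q k) (f ⁻¹' {b})) atTop (𝓝 0) := by
  have hC : IsCompact (f ⁻¹' (insert b (range z))) := hK _ hz.isCompact_insert_range
  refine tendsto_of_subseq_tendsto fun ns hns => ?_
  have hq' : ∀ k : ℕ, ∃ q'', f q'' = z (ns k) ∧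
      dist (q (ns k)) q'' < Metric.infDist (q (ns k)) (f ⁻¹' {z (ns k)}) + 1 / (k + 1) :=
    fun k => near_point_in_fiber hfs (q (ns k)) (z (ns k)) _ (by positivity)
  choose q'' hq''mem hq''dist using hq'
  have hmemC : ∀ k, q'' k ∈ f ⁻¹' (insert b (range z)) := by
    intro k
    simp only [mem_preimage, hq''mem k]
    exact Or.inr ⟨ns k, rfl⟩
  obtain ⟨q', hq'mem, ms, hms, hqconv⟩ := hC.tendsto_subseq hmemC
  have hfq' : f q' = b := by
    have h1 : Tendsto (fun k => f (q'' (ms k))) atTop (𝓝 (f q')) :=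
      (hf.tendsto q').comp hqconv
    have h2 : Tendsto (fun k => f (q'' (ms k))) atTop (𝓝 b) := by
      have : (fun k => f (q'' (ms k))) = fun k => z (ns (ms k)) := by
        funext k; rw [hq''mem]
      rw [this]
      exact (hz.comp hns).comp hms.tendsto_atTop
    exact tendsto_nhds_unique h1 h2
  refine ⟨ms, ?_⟩
  have hle : ∀ k, Metric.infDist (q (ns (ms k))) (f ⁻¹' {b}) ≤
      (Metric.infDist (q (ns (ms k))) (f ⁻¹' {z (ns (ms k))}) + 1 / (ms k + 1))
        + dist (q'' (ms k)) q' := by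
    intro k
    have hq'b : q' ∈ f ⁻¹' {b} := by simp [hfq']
    calc Metric.infDist (q (ns (ms k))) (f ⁻¹' {b}) ≤ dist (q (ns (ms k))) q' :=
          Metric.infDist_le_dist_of_mem hq'b
      _ ≤ dist (q (ns (ms k))) (q'' (ms k)) + dist (q'' (ms k)) q' := dist_triangle _ _ _
      _ ≤ _ := add_le_add (le_of_lt (hq''dist (ms k))) le_rfl
  have h1 : Tendsto (fun k => Metric.infDist (q (ns (ms k))) (f ⁻¹' {z (ns (ms k))}))
      atTop (𝓝 0) := (hd.comp hns).comp hms.tendsto_atTop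
  have h2 : Tendsto (fun k => (1 : ℝ) / (ms k + 1)) atTop (𝓝 0) :=
    tendsto_one_div_add_atTop_nhds_zero_nat.comp hms.tendsto_atTop
  have h3 : Tendsto (fun k => dist (q'' (ms k)) q') atTop (𝓝 0) := by
    rw [← tendsto_iff_dist_tendsto_zero]; exact hqconv
  have hsum := (h1.add h2).add h3
  refine squeeze_zero (fun k => Metric.infDist_nonneg) hle (by simpa using hsum)

/-- L1 : eventually the fibers of a convergent sequence are inside any open set
around the fiber of the limit. -/
lemma eventually_fiber_subset {z : ℕ → X} {b : X} (hz : Tendsto z atTop (𝓝 b))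
    {O : Set M} (hO : IsOpen O) (hFb : f ⁻¹' {b} ⊆ O) :
    ∀ᶠ k in atTop, f ⁻¹' {z k} ⊆ O := by
  by_contra hcon
  rw [Filter.not_eventually] at hcon
  have hcon' : ∃ᶠ k in atTop, ∃ r, f r = z k ∧ r ∉ O := by
    refine hcon.mono fun k hk => ?_
    rw [not_subset] at hk
    obtain ⟨r, hr1, hr2⟩ := hk
    exact ⟨r, hr1, hr2⟩
  obtain ⟨φ, hφ, hφr⟩ := extraction_of_frequently_atTop hcon'
  choose r hr1 hr2 using hφr
  have hzφ : Tendsto (z ∘ φ) atTop (𝓝 b) := hz.comp hφ.tendsto_atTop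
  have hC : IsCompact (f ⁻¹' (insert b (range (z ∘ φ)))) := hK _ hzφ.isCompact_insert_range
  have hmem : ∀ k, r k ∈ f ⁻¹' (insert b (range (z ∘ φ))) := by
    intro k
    simp only [mem_preimage, hr1 k]
    exact Or.inr ⟨k, rfl⟩
  obtain ⟨r', hr'mem, ms, hms, hrconv⟩ := hC.tendsto_subseq hmem
  have hfr' : f r' = b := by
    have h1 : Tendsto (fun k => f (r (ms k))) atTop (𝓝 (f r')) := (hf.tendsto r').comp hrconv
    have h2 : Tendsto (fun k => f (r (ms k))) atTop (𝓝 b) := by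
      have : (fun k => f (r (ms k))) = fun k => (z ∘ φ) (ms k) := by
        funext k; rw [hr1]; rfl
      rw [this]
      exact hzφ.comp hms.tendsto_atTop
    exact tendsto_nhds_unique h1 h2
  have hr'O : r' ∈ O := hFb (by simp [hfr'])
  have : ∀ᶠ k in atTop, r (ms k) ∈ O := hrconv (hO.mem_nhds hr'O)
  obtain ⟨k, hk⟩ := this.exists
  exact hr2 (ms k) hk

/-- eventual membership of a convergent sequence in a `q`-open set containing the limit. -/
lemma eventually_mem_qopen {z : ℕ → X} {b : X} (hz : Tendsto z atTop (𝓝 b))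
    {A : Set X} (hA : IsOpen (f ⁻¹' A)) (hbA : b ∈ A) :
    ∀ᶠ k in atTop, z k ∈ A := by
  have hsub : f ⁻¹' {b} ⊆ f ⁻¹' A := by
    intro m hm
    simp only [mem_preimage, mem_singleton_iff] at hm
    simp [mem_preimage, hm, hbA]
  filter_upwards [eventually_fiber_subset hf hfs hK hz hA hsub] with k hk
  obtain ⟨m, hm⟩ := hfs (z k)
  have : m ∈ f ⁻¹' {z k} := by simp [hm]
  have := hk this
  rwa [mem_preimage, hm] at this

end SeqLemmas

section QOpen

variable (hf : Continuous f) (hfs : Function.Surjective f)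
variable (hK : ∀ K : Set X, IsCompact K → IsCompact (f ⁻¹' K))

include hf hK

/-- the "saturated interior" of an open set is open. -/
lemma isOpen_satCore {O : Set M} (hO : IsOpen O) :
    IsOpen {m | f ⁻¹' {f m} ⊆ O} := by
  rw [← isClosed_compl_iff]
  have : {m | f ⁻¹' {f m} ⊆ O}ᶜ = {m | ∃ r, f r = f m ∧ r ∉ O} := by
    ext m
    simp only [mem_compl_iff, mem_setOf_eq, not_subset]
    constructor
    · rintro ⟨r, hr1, hr2⟩
      exact ⟨r, hr1, hr2⟩
    · rintro ⟨r, hr1, hr2⟩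
      exact ⟨r, hr1, hr2⟩
  rw [this]
  apply IsSeqClosed.isClosed
  intro ms m hms hconv
  choose r hr1 hr2 using hms
  have hfm : Tendsto (fun k => f (ms k)) atTop (𝓝 (f m)) := (hf.tendsto m).comp hconv
  have hC : IsCompact (f ⁻¹' (insert (f m) (range (fun k => f (ms k))))) :=
    hK _ hfm.isCompact_insert_range
  have hmem : ∀ k, r k ∈ f ⁻¹' (insert (f m) (range (fun k => f (ms k)))) := by
    intro k
    simp only [mem_preimage, hr1 k]
    exact Or.inr ⟨k, rfl⟩
  obtain ⟨r', hr'mem, ks, hks, hrconv⟩ := hC.tendsto_subseq hmem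
  have hfr' : f r' = f m := by
    have h1 : Tendsto (fun k => f (r (ks k))) atTop (𝓝 (f r')) := (hf.tendsto r').comp hrconv
    have h2 : Tendsto (fun k => f (r (ks k))) atTop (𝓝 (f m)) := by
      have : (fun k => f (r (ks k))) = fun k => f (ms (ks k)) := by
        funext k; rw [hr1]
      rw [this]
      exact hfm.comp hks.tendsto_atTop
    exact tendsto_nhds_unique h1 h2
  refine ⟨r', hfr', ?_⟩
  have : r' ∈ closure Oᶜ := mem_closure_of_tendsto hrconv (Eventually.of_forall fun k => hr2 (ks k))
  rwa [hO.isClosed_compl.closure_eq] at this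

lemma isOpen_preimage_satBall (w : X) (r : ℝ) :
    IsOpen (f ⁻¹' satBall f w r) := by
  have : f ⁻¹' satBall f w r = {m | f ⁻¹' {f m} ⊆ {m' | Metric.infDist m' (f ⁻¹' {w}) < r}} :=
    rfl
  rw [this]
  exact isOpen_satCore hf hK (isOpen_lt (Metric.continuous_infDist_pt _) continuous_const)

end QOpen

section Hop

variable (hf : Continuous f) (hfs : Function.Surjective f)
variable (hK : ∀ K : Set X, IsCompact K → IsCompact (f ⁻¹' K))

include hf hfs hK

/-- three-hop no-straddle lemma. -/
lemma hop3 (w : X) {A : Set X} (hA : IsOpen (f ⁻¹' A)) (hwA : w ∈ A) :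
    ∃ δ : ℝ, 0 < δ ∧ ∀ z₁ z₂ z₃ : X,
      (∃ p₁, f p₁ = z₁ ∧ Metric.infDist p₁ (f ⁻¹' {w}) < δ) →
      (∃ p₂, f p₂ = z₂ ∧ Metric.infDist p₂ (f ⁻¹' {z₁}) < δ) →
      (∃ p₃, f p₃ = z₃ ∧ Metric.infDist p₃ (f ⁻¹' {z₂}) < δ) → z₃ ∈ A := by
  by_contra hcon
  push_neg at hcon
  have hstep : ∀ k : ℕ, ∃ z₁ z₂ z₃ : X,
      (∃ p₁, f p₁ = z₁ ∧ Metric.infDist p₁ (f ⁻¹' {w}) < 1 / (k + 1)) ∧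
      (∃ p₂, f p₂ = z₂ ∧ Metric.infDist p₂ (f ⁻¹' {z₁}) < 1 / (k + 1)) ∧
      (∃ p₃, f p₃ = z₃ ∧ Metric.infDist p₃ (f ⁻¹' {z₂}) < 1 / (k + 1)) ∧ z₃ ∉ A := by
    intro k
    obtain ⟨z₁, z₂, z₃, h1, h2, h3, h4⟩ := hcon (1 / (k + 1)) (by positivity)
    exact ⟨z₁, z₂, z₃, h1, h2, h3, h4⟩
  choose z₁ z₂ z₃ h1 h2 h3 h4 using hstep
  choose p₁ hp₁ hd₁ using h1
  choose p₂ hp₂ hd₂ using h2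
  choose p₃ hp₃ hd₃ using h3
  have hone : Tendsto (fun k : ℕ => (1 : ℝ) / (k + 1)) atTop (𝓝 0) :=
    tendsto_one_div_add_atTop_nhds_zero_nat
  have hz₁ : Tendsto z₁ atTop (𝓝 w) := by
    refine tendsto_of_infDist_fiber hf hfs hK hp₁ ?_
    exact squeeze_zero (fun k => Metric.infDist_nonneg) (fun k => le_of_lt (hd₁ k)) hone
  have hd₂' : Tendsto (fun k => Metric.infDist (p₂ k) (f ⁻¹' {z₁ k})) atTop (𝓝 0) :=
    squeeze_zero (fun k => Metric.infDist_nonneg) (fun k => le_of_lt (hd₂ k)) hone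
  have hz₂ : Tendsto z₂ atTop (𝓝 w) :=
    tendsto_of_infDist_fiber hf hfs hK hp₂ (infDist_transfer hf hfs hK hz₁ hd₂')
  have hd₃' : Tendsto (fun k => Metric.infDist (p₃ k) (f ⁻¹' {z₂ k})) atTop (𝓝 0) :=
    squeeze_zero (fun k => Metric.infDist_nonneg) (fun k => le_of_lt (hd₃ k)) hone
  have hz₃ : Tendsto z₃ atTop (𝓝 w) :=
    tendsto_of_infDist_fiber hf hfs hK hp₃ (infDist_transfer hf hfs hK hz₂ hd₃')
  obtain ⟨k, hk⟩ := (eventually_mem_qopen hf hfs hK hz₃ hA hwA).exists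
  exact h4 k hk

end Hop

section Step

variable (hf : Continuous f) (hfs : Function.Surjective f)
variable (hK : ∀ K : Set X, IsCompact K → IsCompact (f ⁻¹' K))

include hf hfs hK

/-- the pairwise-star refinement step. -/
lemma refinement_step (T : X → Set X) :
    ∃ W : X → Set X,
      ((∀ w, w ∈ T w) → (∀ w, IsOpen (f ⁻¹' T w)) →
      ((∀ w, w ∈ W w) ∧ (∀ w, IsOpen (f ⁻¹' W w)) ∧
       (∀ w₁ w₂ w₃, (W w₁ ∩ W w₂).Nonempty → (W w₂ ∩ W w₃).Nonempty →
         ∃ u, ∀ y, (y ∈ W w₁ ∨ y ∈ W w₂ ∨ y ∈ W w₃) → y ∈ T u))) := by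
  by_cases h : (∀ w, w ∈ T w) ∧ (∀ w, IsOpen (f ⁻¹' T w))
  swap
  · refine ⟨fun _ => univ, fun h1 h2 => absurd ⟨h1, h2⟩ h⟩
  obtain ⟨hTmem, hTopen⟩ := h
  have hhop := fun w => hop3 hf hfs hK w (hTopen w) (hTmem w)
  choose δ hδpos hδ using hhop
  refine ⟨fun w => satBall f w (δ w / 8), fun _ _ => ?_⟩
  refine ⟨fun w => self_mem_satBall (by linarith [hδpos w]),
    fun w => isOpen_preimage_satBall hf hK w _, ?_⟩
  -- helper : a point of the fiber of y witnessing membership in a satBall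
  have hook : ∀ (w y : X) (r : ℝ), y ∈ satBall f w r →
      ∃ p, f p = y ∧ Metric.infDist p (f ⁻¹' {w}) < r := by
    intro w y r hy
    obtain ⟨p, hp⟩ := hfs y
    exact ⟨p, hp, hy (by simp [hp])⟩
  -- helper : trivial chain step from w to itself
  have self_step : ∀ (w : X) (r : ℝ), 0 < r → ∃ p, f p = w ∧
      Metric.infDist p (f ⁻¹' {w}) < r := by
    intro w r hr
    obtain ⟨p, hp⟩ := hfs w
    refine ⟨p, hp, ?_⟩
    have : p ∈ f ⁻¹' {w} := by simp [hp]
    simpa [Metric.infDist_zero_of_mem this] using hr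
  -- helper : link through a shared point
  have link : ∀ (w w' y : X) (r r' : ℝ), y ∈ satBall f w r → y ∈ satBall f w' r' →
      ∃ p, f p = w' ∧ Metric.infDist p (f ⁻¹' {w}) < r + r' := by
    intro w w' y r r' hy hy'
    obtain ⟨t, ht⟩ := hfs y
    have htw : Metric.infDist t (f ⁻¹' {w}) < r := hy (by simp [ht])
    have htw' : Metric.infDist t (f ⁻¹' {w'}) < r' := hy' (by simp [ht])
    have hfw : (f ⁻¹' {w}).Nonempty := hfs w
    have hfw' : (f ⁻¹' {w'}).Nonempty := hfs w'
    obtain ⟨a₁, ha₁, ha₁d⟩ := (Metric.infDist_lt_iff hfw).1 htw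
    obtain ⟨a₂, ha₂, ha₂d⟩ := (Metric.infDist_lt_iff hfw').1 htw'
    refine ⟨a₂, ha₂, ?_⟩
    calc Metric.infDist a₂ (f ⁻¹' {w}) ≤ dist a₂ a₁ := Metric.infDist_le_dist_of_mem ha₁
      _ ≤ dist a₂ t + dist t a₁ := dist_triangle _ _ _
      _ = dist t a₂ + dist t a₁ := by rw [dist_comm a₂ t]
      _ < r + r' := by linarith
  -- the main absorption lemmas
  -- case : the first center has the largest radius
  have absorb_left : ∀ a b c : X,
      (satBall f a (δ a / 8) ∩ satBall f b (δ b / 8)).Nonempty →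
      (satBall f b (δ b / 8) ∩ satBall f c (δ c / 8)).Nonempty →
      δ b ≤ δ a → δ c ≤ δ a →
      ∀ y, (y ∈ satBall f a (δ a / 8) ∨ y ∈ satBall f b (δ b / 8) ∨
        y ∈ satBall f c (δ c / 8)) → y ∈ T a := by
    intro a b c hab hbc hba hca y hy
    obtain ⟨yab, hyab1, hyab2⟩ := hab
    obtain ⟨ybc, hybc1, hybc2⟩ := hbc
    have hδa := hδpos a
    have hδb := hδpos b
    have hδc := hδpos c
    -- link from a to b : a point of the fiber of b close to the fiber of a
    have Lab : ∃ p, f p = b ∧ Metric.infDist p (f ⁻¹' {a}) < δ a :=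
      let ⟨p, h1, h2⟩ := link a b yab (δ a / 8) (δ b / 8) hyab1 hyab2
      ⟨p, h1, by linarith⟩
    -- link from b to c
    have Lbc : ∃ p, f p = c ∧ Metric.infDist p (f ⁻¹' {b}) < δ a :=
      let ⟨p, h1, h2⟩ := link b c ybc (δ b / 8) (δ c / 8) hybc1 hybc2
      ⟨p, h1, by linarith⟩
    rcases hy with hy | hy | hy
    · -- y ∈ W a : chain a ⇝ a ⇝ a ⇝ y
      refine hδ a a a y (self_step a (δ a) hδa) (self_step a (δ a) hδa) ?_
      obtain ⟨p, h1, h2⟩ := hook a y (δ a / 8) hy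
      exact ⟨p, h1, by linarith⟩
    · -- y ∈ W b : chain a ⇝ b ⇝ b ⇝ y
      refine hδ a b b y Lab (self_step b (δ a) hδa) ?_
      obtain ⟨p, h1, h2⟩ := hook b y (δ b / 8) hy
      exact ⟨p, h1, by linarith⟩
    · -- y ∈ W c : chain a ⇝ b ⇝ c ⇝ y
      refine hδ a b c y Lab Lbc ?_
      obtain ⟨p, h1, h2⟩ := hook c y (δ c / 8) hy
      exact ⟨p, h1, by linarith⟩
  -- case : the middle center has the largest radius
  have absorb_mid : ∀ a b c : X,
      (satBall f a (δ a / 8) ∩ satBall f b (δ b / 8)).Nonempty →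
      (satBall f b (δ b / 8) ∩ satBall f c (δ c / 8)).Nonempty →
      δ a ≤ δ b → δ c ≤ δ b →
      ∀ y, (y ∈ satBall f a (δ a / 8) ∨ y ∈ satBall f b (δ b / 8) ∨
        y ∈ satBall f c (δ c / 8)) → y ∈ T b := by
    intro a b c hab hbc hba hca y hy
    obtain ⟨yab, hyab1, hyab2⟩ := hab
    obtain ⟨ybc, hybc1, hybc2⟩ := hbc
    have hδa := hδpos a
    have hδb := hδpos b
    have hδc := hδpos c
    have Lba : ∃ p, f p = a ∧ Metric.infDist p (f ⁻¹' {b}) < δ b :=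
      let ⟨p, h1, h2⟩ := link b a yab (δ b / 8) (δ a / 8) hyab2 hyab1
      ⟨p, h1, by linarith⟩
    have Lbc : ∃ p, f p = c ∧ Metric.infDist p (f ⁻¹' {b}) < δ b :=
      let ⟨p, h1, h2⟩ := link b c ybc (δ b / 8) (δ c / 8) hybc1 hybc2
      ⟨p, h1, by linarith⟩
    rcases hy with hy | hy | hy
    · -- y ∈ W a : chain b ⇝ a ⇝ a ⇝ y
      refine hδ b a a y Lba (self_step a (δ b) hδb) ?_
      obtain ⟨p, h1, h2⟩ := hook a y (δ a / 8) hy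
      exact ⟨p, h1, by linarith⟩
    · refine hδ b b b y (self_step b (δ b) hδb) (self_step b (δ b) hδb) ?_
      obtain ⟨p, h1, h2⟩ := hook b y (δ b / 8) hy
      exact ⟨p, h1, by linarith⟩
    · refine hδ b c c y Lbc (self_step c (δ b) hδb) ?_
      obtain ⟨p, h1, h2⟩ := hook c y (δ c / 8) hy
      exact ⟨p, h1, by linarith⟩
  intro w₁ w₂ w₃ h12 h23
  rcases le_total (δ w₁) (δ w₂) with h1 | h1
  · rcases le_total (δ w₃) (δ w₂) with h2 | h2
    · exact ⟨w₂, absorb_mid w₁ w₂ w₃ h12 h23 h1 h2⟩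
    · -- δ w₃ is the largest (δ w₁ ≤ δ w₂ ≤ δ w₃)
      refine ⟨w₃, fun y hy => ?_⟩
      have := absorb_left w₃ w₂ w₁ (by rwa [inter_comm] at h23) (by rwa [inter_comm] at h12)
        h2 (le_trans h1 h2)
      apply this
      tauto
  · rcases le_total (δ w₃) (δ w₁) with h2 | h2
    · exact ⟨w₁, absorb_left w₁ w₂ w₃ h12 h23 h1 h2⟩
    · -- δ w₃ largest (δ w₂ ≤ δ w₁ ≤ δ w₃)
      refine ⟨w₃, fun y hy => ?_⟩
      have := absorb_left w₃ w₂ w₁ (by rwa [inter_comm] at h23) (by rwa [inter_comm] at h12)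
        (le_trans h1 h2) h2
      apply this
      tauto

end Step

/-- wrapper type carrying the new metric -/
structure MetricCopy (X : Type u) : Type u where
  val : X

section Development

variable (hf : Continuous f) (hfs : Function.Surjective f)
variable (hK : ∀ K : Set X, IsCompact K → IsCompact (f ⁻¹' K))

include hf hfs hK

/-- the development property : small common sat-balls force topological closeness. -/
lemma development (a : X) (V : Set X) (hV : IsOpen V) (haV : a ∈ V) :
    ∃ n : ℕ, ∀ z y, a ∈ satBall f z ((1/2 : ℝ)^n) → y ∈ satBall f z ((1/2 : ℝ)^n) → y ∈ V := by
  by_contra hcon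
  push_neg at hcon
  have hstep : ∀ n : ℕ, ∃ z y, a ∈ satBall f z ((1/2 : ℝ)^n) ∧
      y ∈ satBall f z ((1/2 : ℝ)^n) ∧ y ∉ V := by
    intro n
    obtain ⟨z, y, h1, h2, h3⟩ := hcon n
    exact ⟨z, y, h1, h2, h3⟩
  choose z y h1 h2 h3 using hstep
  have hpow : Tendsto (fun n : ℕ => (1/2 : ℝ)^n) atTop (𝓝 0) := by
    apply tendsto_pow_atTop_nhds_zero_of_lt_one <;> norm_num
  obtain ⟨u₀, hu₀⟩ := hfs a
  -- points of the fibers of z n close to u₀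
  have hp : ∀ n, ∃ p, f p = z n ∧ dist u₀ p < (1/2 : ℝ)^n := by
    intro n
    have : Metric.infDist u₀ (f ⁻¹' {z n}) < (1/2 : ℝ)^n := h1 n (by simp [hu₀])
    obtain ⟨p, hp1, hp2⟩ := (Metric.infDist_lt_iff (hfs (z n))).1 this
    exact ⟨p, hp1, hp2⟩
  choose p hp1 hp2 using hp
  have hz : Tendsto z atTop (𝓝 a) := by
    refine tendsto_of_infDist_fiber hf hfs hK hp1 ?_
    refine squeeze_zero (fun n => Metric.infDist_nonneg) (fun n => ?_) hpow
    calc Metric.infDist (p n) (f ⁻¹' {a}) ≤ dist (p n) u₀ :=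
          Metric.infDist_le_dist_of_mem (by simp [hu₀])
      _ ≤ (1/2 : ℝ)^n := by rw [dist_comm]; exact le_of_lt (hp2 n)
  choose q hq using fun n => hfs (y n)
  have hqd : Tendsto (fun n => Metric.infDist (q n) (f ⁻¹' {z n})) atTop (𝓝 0) := by
    refine squeeze_zero (fun n => Metric.infDist_nonneg) (fun n => ?_) hpow
    exact le_of_lt (h2 n (by simp [hq n]))
  have hqa : Tendsto (fun n => Metric.infDist (q n) (f ⁻¹' {a})) atTop (𝓝 0) :=
    infDist_transfer hf hfs hK hz hqd
  have hy : Tendsto y atTop (𝓝 a) :=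
    tendsto_of_infDist_fiber hf hfs hK (fun n => hq n) hqa
  obtain ⟨n, hn⟩ := (hy.eventually (hV.eventually_mem haV)).exists
  exact h3 n hn

/-- separation : if `x` and `y` lie in common sat-balls of all radii, they are equal. -/
lemma sep_of_common (x₀ y₀ : X)
    (h : ∀ k : ℕ, ∃ u, x₀ ∈ satBall f u ((1/2 : ℝ)^k) ∧ y₀ ∈ satBall f u ((1/2 : ℝ)^k)) :
    x₀ = y₀ := by
  choose u hu1 hu2 using h
  have hpow : Tendsto (fun n : ℕ => (1/2 : ℝ)^n) atTop (𝓝 0) := by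
    apply tendsto_pow_atTop_nhds_zero_of_lt_one <;> norm_num
  obtain ⟨a₀, ha₀⟩ := hfs x₀
  have hp : ∀ n, ∃ p, f p = u n ∧ dist a₀ p < (1/2 : ℝ)^n := by
    intro n
    have : Metric.infDist a₀ (f ⁻¹' {u n}) < (1/2 : ℝ)^n := hu1 n (by simp [ha₀])
    obtain ⟨p, hp1, hp2⟩ := (Metric.infDist_lt_iff (hfs (u n))).1 this
    exact ⟨p, hp1, hp2⟩
  choose p hp1 hp2 using hp
  have hu : Tendsto u atTop (𝓝 x₀) := by
    refine tendsto_of_infDist_fiber hf hfs hK hp1 ?_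
    refine squeeze_zero (fun n => Metric.infDist_nonneg) (fun n => ?_) hpow
    calc Metric.infDist (p n) (f ⁻¹' {x₀}) ≤ dist (p n) a₀ :=
          Metric.infDist_le_dist_of_mem (by simp [ha₀])
      _ ≤ (1/2 : ℝ)^n := by rw [dist_comm]; exact le_of_lt (hp2 n)
  obtain ⟨q₀, hq₀⟩ := hfs y₀
  have hqd : Tendsto (fun n => Metric.infDist q₀ (f ⁻¹' {u n})) atTop (𝓝 0) := by
    refine squeeze_zero (fun n => Metric.infDist_nonneg) (fun n => ?_) hpow
    exact le_of_lt (hu2 n (by simp [hq₀]))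
  have hq : Tendsto (fun _ : ℕ => Metric.infDist q₀ (f ⁻¹' {x₀})) atTop (𝓝 0) :=
    infDist_transfer hf hfs hK hu hqd
  have h0 : Metric.infDist q₀ (f ⁻¹' {x₀}) = 0 :=
    tendsto_nhds_unique tendsto_const_nhds hq
  have hclosed : IsClosed (f ⁻¹' {x₀}) := (isClosed_singleton.preimage hf)
  have hmem : q₀ ∈ f ⁻¹' {x₀} :=
    (hclosed.mem_iff_infDist_zero (hfs x₀)).2 h0
  have : f q₀ = x₀ := hmem
  rw [← hq₀, this]

end Development

section Final

variable (hf : Continuous f) (hfs : Function.Surjective f)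
variable (hK : ∀ K : Set X, IsCompact K → IsCompact (f ⁻¹' K))

open scoped NNReal

include hf hfs hK

lemma cs_witness :
    ∃ (N : Type u) (_ : MetricSpace N) (g : N → X) (s : X → N),
      Continuous g ∧ Function.Surjective g ∧ (∀ x, g (s x) = x) ∧
      ∀ (x : ℕ → X) (a : X), Tendsto x atTop (𝓝 a) →
        ∃ m : N, Tendsto (fun n => s (x n)) atTop (𝓝 m) := by
  classical
  choose Wfn hWfn using refinement_step hf hfs hK
  let C : ℕ → X → Set X := fun k =>
    Nat.rec (motive := fun _ => X → Set X) (fun _ => univ)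
      (fun k Ck => Wfn (fun w => Ck w ∩ satBall f w ((1/2 : ℝ)^(k+1)))) k
  have hCsucc : ∀ k : ℕ, C (k+1) = Wfn (fun w => C k w ∩ satBall f w ((1/2 : ℝ)^(k+1))) :=
    fun k => rfl
  have hC0 : ∀ w, C 0 w = univ := fun _ => rfl
  have hgood : ∀ k, (∀ w, w ∈ C k w) ∧ (∀ w, IsOpen (f ⁻¹' C k w)) := by
    intro k
    induction k with
    | zero =>
      refine ⟨fun w => by rw [hC0]; exact mem_univ w, fun w => ?_⟩
      rw [hC0]
      simpa using isOpen_univ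
    | succ k ih =>
      have hTmem : ∀ w, w ∈ C k w ∩ satBall f w ((1/2:ℝ)^(k+1)) :=
        fun w => ⟨ih.1 w, self_mem_satBall (by positivity)⟩
      have hTopen : ∀ w, IsOpen (f ⁻¹' (C k w ∩ satBall f w ((1/2:ℝ)^(k+1)))) := by
        intro w
        rw [preimage_inter]
        exact (ih.2 w).inter (isOpen_preimage_satBall hf hK w _)
      have h := hWfn _ hTmem hTopen
      rw [hCsucc k]
      exact ⟨h.1, h.2.1⟩
  have hchain : ∀ (k : ℕ) (w₁ w₂ w₃ : X), (C (k+1) w₁ ∩ C (k+1) w₂).Nonempty →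
      (C (k+1) w₂ ∩ C (k+1) w₃).Nonempty →
      ∃ u, ∀ y, (y ∈ C (k+1) w₁ ∨ y ∈ C (k+1) w₂ ∨ y ∈ C (k+1) w₃) →
        y ∈ C k u ∩ satBall f u ((1/2:ℝ)^(k+1)) := by
    intro k
    have hTmem : ∀ w, w ∈ C k w ∩ satBall f w ((1/2:ℝ)^(k+1)) :=
      fun w => ⟨(hgood k).1 w, self_mem_satBall (by positivity)⟩
    have hTopen : ∀ w, IsOpen (f ⁻¹' (C k w ∩ satBall f w ((1/2:ℝ)^(k+1)))) := by
      intro w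
      rw [preimage_inter]
      exact ((hgood k).2 w).inter (isOpen_preimage_satBall hf hK w _)
    have h := (hWfn _ hTmem hTopen).2.2
    rw [hCsucc k]
    exact h
  -- the common-level relation
  let Com : ℕ → X → X → Prop := fun k x y => ∃ u, x ∈ C k u ∧ y ∈ C k u
  have hCom0 : ∀ x y, Com 0 x y := by
    intro x y
    exact ⟨x, by rw [hC0]; exact mem_univ x, by rw [hC0]; exact mem_univ y⟩
  have hComSucc : ∀ k x y, Com (k+1) x y → Com k x y ∧
      ∃ u, x ∈ satBall f u ((1/2:ℝ)^(k+1)) ∧ y ∈ satBall f u ((1/2:ℝ)^(k+1)) := by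
    rintro k x y ⟨u, hx, hy⟩
    obtain ⟨u', hu'⟩ := hchain k u u u ⟨x, hx, hx⟩ ⟨x, hx, hx⟩
    have h1 := hu' x (Or.inl hx)
    have h2 := hu' y (Or.inl hy)
    exact ⟨⟨u', h1.1, h2.1⟩, u', h1.2, h2.2⟩
  have hComDown : ∀ k j, j ≤ k → ∀ x y, Com k x y → Com j x y := by
    intro k
    induction k with
    | zero =>
      intro j hj x y h
      rw [Nat.le_zero.1 hj]
      exact h
    | succ k ih =>
      intro j hj x y h
      rcases Nat.lt_or_ge j (k+1) with hlt | hge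
      · exact ih j (Nat.lt_succ_iff.1 hlt) x y (hComSucc k x y h).1
      · rw [le_antisymm hj hge]
        exact h
  have hChain4 : ∀ k x₁ x₂ x₃ x₄, Com (k+1) x₁ x₂ → Com (k+1) x₂ x₃ → Com (k+1) x₃ x₄ →
      Com k x₁ x₄ := by
    rintro k x₁ x₂ x₃ x₄ ⟨u₁, h11, h12⟩ ⟨u₂, h21, h22⟩ ⟨u₃, h31, h32⟩
    obtain ⟨u, hu⟩ := hchain k u₁ u₂ u₃ ⟨x₂, h12, h21⟩ ⟨x₃, h22, h31⟩
    exact ⟨u, (hu x₁ (Or.inl h11)).1, (hu x₄ (Or.inr (Or.inr h32))).1⟩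
  -- pre-distance
  let d : X → X → ℝ≥0 := fun x y => ⨅ k : {k : ℕ // Com k x y}, ((2:ℝ≥0)⁻¹)^(k : ℕ)
  have hdle : ∀ {k x y}, Com k x y → d x y ≤ ((2:ℝ≥0)⁻¹)^k := by
    intro k x y h
    show (⨅ k : {k : ℕ // Com k x y}, ((2:ℝ≥0)⁻¹)^(k : ℕ)) ≤ ((2:ℝ≥0)⁻¹)^k
    exact ciInf_le (OrderBot.bddBelow _) (⟨k, h⟩ : {k : ℕ // Com k x y})
  have hpow_anti : ∀ {i j : ℕ}, i ≤ j → ((2:ℝ≥0)⁻¹)^j ≤ ((2:ℝ≥0)⁻¹)^i := by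
    intro i j hij
    exact pow_le_pow_of_le_one (zero_le) (by norm_num) hij
  have hpow_strict : ∀ {i j : ℕ}, i < j → ((2:ℝ≥0)⁻¹)^j < ((2:ℝ≥0)⁻¹)^i := by
    intro i j hij
    refine pow_lt_pow_right_of_lt_one₀ ?_ ?_ hij
    · exact_mod_cast (by norm_num : (0:ℝ) < (2:ℝ)⁻¹)
    · exact_mod_cast (by norm_num : ((2:ℝ)⁻¹) < 1)
  have hdle_iff : ∀ (k : ℕ) (x y : X), d x y ≤ ((2:ℝ≥0)⁻¹)^k ↔ Com k x y := by
    intro k x y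
    refine ⟨fun h => ?_, fun h => hdle h⟩
    by_contra hc
    have hk0 : k ≠ 0 := fun h0 => hc (h0 ▸ hCom0 x y)
    obtain ⟨K, rfl⟩ := Nat.exists_eq_succ_of_ne_zero hk0
    haveI : Nonempty {k : ℕ // Com k x y} := ⟨⟨0, hCom0 x y⟩⟩
    have hlow : ((2:ℝ≥0)⁻¹)^K ≤ d x y := by
      show ((2:ℝ≥0)⁻¹)^K ≤ ⨅ k : {k : ℕ // Com k x y}, ((2:ℝ≥0)⁻¹)^(k : ℕ)
      refine le_ciInf fun ⟨j, hj⟩ => ?_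
      have hjK : j ≤ K := by
        by_contra hcj
        push_neg at hcj
        exact hc (hComDown j (K+1) hcj x y hj)
      exact hpow_anti hjK
    have := lt_of_le_of_lt (hlow.trans h) (hpow_strict (Nat.lt_succ_self K))
    exact absurd this (lt_irrefl _)
  have hdzero_of : ∀ x y, (∀ k, Com k x y) → d x y = 0 := by
    intro x y h
    have hle : ∀ k : ℕ, (d x y : ℝ) ≤ (1/2 : ℝ)^k := by
      intro k
      have := hdle (h k)
      have h2 : (((2:ℝ≥0)⁻¹)^k : ℝ) = (1/2 : ℝ)^k := by
        push_cast
        norm_num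
      calc (d x y : ℝ) ≤ (((2:ℝ≥0)⁻¹)^k : ℝ) := by exact_mod_cast this
        _ = (1/2 : ℝ)^k := h2
    have hlim : Tendsto (fun k : ℕ => (1/2:ℝ)^k) atTop (𝓝 0) := by
      apply tendsto_pow_atTop_nhds_zero_of_lt_one <;> norm_num
    have : (d x y : ℝ) ≤ 0 := ge_of_tendsto' hlim fun k => hle k
    have h0 : (d x y : ℝ) = 0 := le_antisymm this (by positivity)
    exact_mod_cast h0
  have hdself : ∀ x, d x x = 0 := by
    intro x
    exact hdzero_of x x fun k => ⟨x, (hgood k).1 x, (hgood k).1 x⟩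
  have hdcomm : ∀ x y, d x y = d y x := by
    intro x y
    have hsymm : ∀ a b : X, d a b ≤ d b a := by
      intro a b
      haveI : Nonempty {k : ℕ // Com k b a} := ⟨⟨0, hCom0 b a⟩⟩
      show d a b ≤ ⨅ k : {k : ℕ // Com k b a}, ((2:ℝ≥0)⁻¹)^(k : ℕ)
      refine le_ciInf fun ⟨j, hj⟩ => ?_
      obtain ⟨u, h1, h2⟩ := hj
      exact hdle ⟨u, h2, h1⟩
    exact le_antisymm (hsymm x y) (hsymm y x)
  have hdform : ∀ x y, d x y = 0 ∨ ∃ N, d x y = ((2:ℝ≥0)⁻¹)^N := by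
    intro x y
    by_cases h : ∀ k, Com k x y
    · exact Or.inl (hdzero_of x y h)
    · push_neg at h
      have hex : ∃ k, ¬ Com k x y := h
      have hKbad : ¬ Com (Nat.find hex) x y := Nat.find_spec hex
      have hKpos : Nat.find hex ≠ 0 := fun h0 => hKbad (by rw [h0]; exact hCom0 x y)
      obtain ⟨N, hN⟩ := Nat.exists_eq_succ_of_ne_zero hKpos
      have hComN : Com N x y := by
        by_contra hcN
        have hfl : Nat.find hex ≤ N := Nat.find_le hcN
        omega
      refine Or.inr ⟨N, le_antisymm (hdle hComN) ?_⟩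
      haveI : Nonempty {k : ℕ // Com k x y} := ⟨⟨0, hCom0 x y⟩⟩
      show ((2:ℝ≥0)⁻¹)^N ≤ ⨅ k : {k : ℕ // Com k x y}, ((2:ℝ≥0)⁻¹)^(k : ℕ)
      refine le_ciInf fun ⟨j, hj⟩ => ?_
      have hjN : j ≤ N := by
        by_contra hcj
        push_neg at hcj
        exact hKbad (hComDown j (Nat.find hex) (by omega) x y hj)
      exact hpow_anti hjN
  -- the four-point Frink inequality
  have hd4 : ∀ x₁ x₂ x₃ x₄ : X,
      d x₁ x₄ ≤ 2 * max (d x₁ x₂) (max (d x₂ x₃) (d x₃ x₄)) := by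
    intro x₁ x₂ x₃ x₄
    set m := max (d x₁ x₂) (max (d x₂ x₃) (d x₃ x₄)) with hm
    have h12 : d x₁ x₂ ≤ m := le_max_left _ _
    have h23 : d x₂ x₃ ≤ m := le_trans (le_max_left _ _) (le_max_right _ _)
    have h34 : d x₃ x₄ ≤ m := le_trans (le_max_right _ _) (le_max_right _ _)
    by_cases hm0 : m = 0
    · have hall : ∀ k, Com k x₁ x₄ := by
        intro k
        have c12 : Com (k+1) x₁ x₂ := (hdle_iff (k+1) _ _).1 (by rw [hm0] at h12; exact h12.trans (zero_le))
        have c23 : Com (k+1) x₂ x₃ := (hdle_iff (k+1) _ _).1 (by rw [hm0] at h23; exact h23.trans (zero_le))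
        have c34 : Com (k+1) x₃ x₄ := (hdle_iff (k+1) _ _).1 (by rw [hm0] at h34; exact h34.trans (zero_le))
        exact hChain4 k x₁ x₂ x₃ x₄ c12 c23 c34
      rw [hdzero_of x₁ x₄ hall]
      exact zero_le
    · -- m equals one of the three distances, hence is a power of 1/2
      have hmval : m = d x₁ x₂ ∨ m = d x₂ x₃ ∨ m = d x₃ x₄ := by
        rcases max_cases (d x₁ x₂) (max (d x₂ x₃) (d x₃ x₄)) with ⟨h, _⟩ | ⟨h, _⟩
        · exact Or.inl h
        · rcases max_cases (d x₂ x₃) (d x₃ x₄) with ⟨h', _⟩ | ⟨h', _⟩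
          · rw [hm, h, h']
            exact Or.inr (Or.inl rfl)
          · rw [hm, h, h']
            exact Or.inr (Or.inr rfl)
      have hpow : ∃ N, m = ((2:ℝ≥0)⁻¹)^N := by
        rcases hmval with h | h | h
        · rcases hdform x₁ x₂ with h0 | ⟨N, hN⟩
          · exact absurd (h.trans h0) hm0
          · exact ⟨N, h.trans hN⟩
        · rcases hdform x₂ x₃ with h0 | ⟨N, hN⟩
          · exact absurd (h.trans h0) hm0
          · exact ⟨N, h.trans hN⟩
        · rcases hdform x₃ x₄ with h0 | ⟨N, hN⟩
          · exact absurd (h.trans h0) hm0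
          · exact ⟨N, h.trans hN⟩
      obtain ⟨N, hN⟩ := hpow
      have c12 : Com N x₁ x₂ := (hdle_iff N _ _).1 (hN ▸ h12)
      have c23 : Com N x₂ x₃ := (hdle_iff N _ _).1 (hN ▸ h23)
      have c34 : Com N x₃ x₄ := (hdle_iff N _ _).1 (hN ▸ h34)
      rcases Nat.eq_zero_or_pos N with hN0 | hNpos
      · -- N = 0 : trivial bound
        have hd14 : d x₁ x₄ ≤ 1 := by
          have h1 : d x₁ x₄ ≤ ((2:ℝ≥0)⁻¹)^0 := hdle (k := 0) (hCom0 x₁ x₄)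
          simpa using h1
        have hm1 : m = 1 := by rw [hN, hN0, pow_zero]
        calc d x₁ x₄ ≤ 1 := hd14
          _ ≤ 2 * 1 := by norm_num
          _ = 2 * m := by rw [hm1]
      · obtain ⟨K, rfl⟩ := Nat.exists_eq_succ_of_ne_zero (Nat.pos_iff_ne_zero.1 hNpos)
        have hcom : Com K x₁ x₄ := hChain4 K x₁ x₂ x₃ x₄ c12 c23 c34
        have : d x₁ x₄ ≤ ((2:ℝ≥0)⁻¹)^K := hdle hcom
        calc d x₁ x₄ ≤ ((2:ℝ≥0)⁻¹)^K := this
          _ = 2 * ((2:ℝ≥0)⁻¹)^(K+1) := by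
              have h2 : (2:ℝ≥0) * 2⁻¹ = 1 := by
                rw [mul_inv_cancel₀]
                norm_num
              rw [pow_succ, mul_comm (((2:ℝ≥0)⁻¹)^K) _, ← mul_assoc, h2, one_mul]
          _ = 2 * m := by rw [hN]
  -- build the metric space on the wrapper type
  let dd : MetricCopy X → MetricCopy X → ℝ≥0 := fun a b => d a.val b.val
  have hdd_self : ∀ a, dd a a = 0 := fun a => hdself a.val
  have hdd_comm : ∀ a b, dd a b = dd b a := fun a b => hdcomm _ _
  letI instP : PseudoMetricSpace (MetricCopy X) :=
    PseudoMetricSpace.ofPreNNDist dd hdd_self hdd_comm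
  have hdist_le : ∀ a b : MetricCopy X, dist a b ≤ (dd a b : ℝ) :=
    PseudoMetricSpace.dist_ofPreNNDist_le dd hdd_self hdd_comm
  have hle_dist : ∀ a b : MetricCopy X, (dd a b : ℝ) ≤ 2 * dist a b :=
    PseudoMetricSpace.le_two_mul_dist_ofPreNNDist dd hdd_self hdd_comm
      (fun a b c e => hd4 a.val b.val c.val e.val)
  have hdist_nonneg' : ∀ a b : MetricCopy X, 0 ≤ dist a b := fun a b => dist_nonneg
  -- common small satBalls from small distance
  have hcommon : ∀ (a b : MetricCopy X) (k : ℕ), (dd a b : ℝ) < ((1:ℝ)/2)^(k+1) →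
      ∃ u, a.val ∈ satBall f u ((1/2:ℝ)^(k+1)) ∧ b.val ∈ satBall f u ((1/2:ℝ)^(k+1)) := by
    intro a b k h
    have hcast : (((2:ℝ≥0)⁻¹)^(k+1) : ℝ) = ((1:ℝ)/2)^(k+1) := by
      push_cast
      norm_num
    have h1 : dd a b ≤ ((2:ℝ≥0)⁻¹)^(k+1) := by
      have h1' : (dd a b : ℝ) ≤ (((2:ℝ≥0)⁻¹)^(k+1) : ℝ) := by
        rw [hcast]
        exact le_of_lt h
      exact_mod_cast h1'
    have h2 : Com (k+1) a.val b.val := (hdle_iff (k+1) _ _).1 h1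
    exact (hComSucc k _ _ h2).2
  -- separation
  have heq : ∀ a b : MetricCopy X, dist a b = 0 → a = b := by
    intro a b h
    have h2 : (dd a b : ℝ) ≤ 0 := by
      have := hle_dist a b
      rw [h] at this
      simpa using this
    have h3 : dd a b = 0 := by
      have h4 : (dd a b : ℝ) = 0 := le_antisymm h2 (by positivity)
      exact_mod_cast h4
    have h5 : ∀ k : ℕ, ∃ u, a.val ∈ satBall f u ((1/2:ℝ)^(k+1)) ∧
        b.val ∈ satBall f u ((1/2:ℝ)^(k+1)) := by
      intro k
      refine hcommon a b k ?_
      rw [h3]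
      positivity
    have hsep : a.val = b.val := by
      refine sep_of_common hf hfs hK a.val b.val fun k => ?_
      obtain ⟨u, h1', h2'⟩ := h5 k
      have hmono : ((1:ℝ)/2)^(k+1) ≤ ((1:ℝ)/2)^k :=
        pow_le_pow_of_le_one (by norm_num) (by norm_num) (Nat.le_succ k)
      exact ⟨u, satBall_mono hmono h1', satBall_mono hmono h2'⟩
    cases a
    cases b
    simpa using hsep
  letI instM : MetricSpace (MetricCopy X) :=
    { instP with eq_of_dist_eq_zero := fun {a b} h => heq a b h }
  refine ⟨MetricCopy X, instM, fun a => a.val, fun x => ⟨x⟩, ?_, ?_, ?_, ?_⟩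
  · -- continuity of the projection
    apply SeqContinuous.continuous
    intro u a hu
    have hd0 : Tendsto (fun j => dist (u j) a) atTop (𝓝 0) :=
      tendsto_iff_dist_tendsto_zero.1 hu
    rw [Filter.tendsto_def]
    intro V hV
    obtain ⟨V', hV'sub, hV'open, haV'⟩ := mem_nhds_iff.1 hV
    obtain ⟨n₀, hn₀⟩ := development hf hfs hK a.val V' hV'open haV'
    have hpos : (0:ℝ) < ((1:ℝ)/2)^(n₀+1) / 2 := by positivity
    have hsmall : ∀ᶠ j in atTop, dist (u j) a < ((1:ℝ)/2)^(n₀+1) / 2 :=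
      hd0.eventually (gt_mem_nhds hpos)
    have hmono : ((1:ℝ)/2)^(n₀+1) ≤ ((1:ℝ)/2)^n₀ :=
      pow_le_pow_of_le_one (by norm_num) (by norm_num) (Nat.le_succ n₀)
    filter_upwards [hsmall] with j hj
    have hlt : (dd (u j) a : ℝ) < ((1:ℝ)/2)^(n₀+1) := by
      have := hle_dist (u j) a
      linarith
    obtain ⟨w, hw1, hw2⟩ := hcommon (u j) a n₀ hlt
    exact hV'sub (hn₀ w (u j).val (satBall_mono hmono hw2) (satBall_mono hmono hw1))
  · intro x
    exact ⟨⟨x⟩, rfl⟩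
  · intro x
    rfl
  · -- the cs property of the section
    intro x a hx
    refine ⟨⟨a⟩, ?_⟩
    rw [tendsto_iff_dist_tendsto_zero]
    have hub : ∀ ε : ℝ, 0 < ε → ∀ᶠ j in atTop, dist ((⟨x j⟩ : MetricCopy X)) (⟨a⟩ : MetricCopy X) < ε := by
      intro ε hε
      obtain ⟨k, hk⟩ := exists_pow_lt_of_lt_one hε (by norm_num : (1:ℝ)/2 < 1)
      have hev : ∀ᶠ j in atTop, x j ∈ C k a :=
        eventually_mem_qopen hf hfs hK hx ((hgood k).2 a) ((hgood k).1 a)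
      filter_upwards [hev] with j hj
      have hcom : Com k (x j) a := ⟨a, hj, (hgood k).1 a⟩
      have hle2 : dd ⟨x j⟩ ⟨a⟩ ≤ ((2:ℝ≥0)⁻¹)^k := hdle hcom
      have : dist (⟨x j⟩ : MetricCopy X) (⟨a⟩ : MetricCopy X) ≤ (((2:ℝ≥0)⁻¹)^k : ℝ) :=
        le_trans (hdist_le _ _) (by exact_mod_cast hle2)
      have hcast : (((2:ℝ≥0)⁻¹)^k : ℝ) = ((1:ℝ)/2)^k := by push_cast; norm_num
      calc dist (⟨x j⟩ : MetricCopy X) (⟨a⟩ : MetricCopy X) ≤ ((1:ℝ)/2)^k := by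
            rw [← hcast]; exact this
        _ < ε := hk
    rw [Metric.tendsto_atTop]
    intro ε hε
    obtain ⟨N, hN⟩ := (eventually_atTop.1 (hub ε hε))
    exact ⟨N, fun n hn => by simpa [Real.dist_eq, abs_of_nonneg (hdist_nonneg' _ _)] using hN n hn⟩

end Final

end MonsterDev


/-- A Hausdorff space is k*-metrizable iff it is cs*-metrizable and all its
compact subsets are sequentially compact; likewise it is k-metrizable iff it is
cs-metrizable and all its compact subsets are sequentially compact. -/
theorem stmt_7 {X : Type u} [TopologicalSpace X] [T2Space X] :
    (KStarMetrizable X ↔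
      CsStarMetrizable X ∧ ∀ K : Set X, IsCompact K → IsSeqCompact K) ∧
    (KMetrizable X ↔
      CsMetrizable X ∧ ∀ K : Set X, IsCompact K → IsSeqCompact K) := by
  constructor
  · constructor
    · rintro ⟨M, _, f, s, hf, hfs, hsec, hK⟩
      exact ⟨⟨M, ‹_›, f, s, hf, hfs, hsec, csstar_of_kstar (f := f) hK⟩,
        fun K hKc => seq_of_kstar hf hsec hK hKc⟩
    · rintro ⟨⟨M, _, f, s, hf, hfs, hsec, hcs⟩, hseq⟩
      exact ⟨M, ‹_›, f, s, hf, hfs, hsec, fun K hKc => kstar_of_csstar (f := f) hcs hseq hKc⟩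
  · constructor
    · rintro ⟨M, _, f, hf, hfs, hK⟩
      refine ⟨?_, fun K hKc => seq_of_k hf hfs hK hKc⟩
      obtain ⟨N, _, g, s, hg, hgs, hsec, hcs⟩ := cs_witness hf hfs hK
      exact ⟨N, ‹_›, g, s, hg, hgs, hsec, hcs⟩
    · rintro ⟨⟨M, _, f, s, hf, hfs, hsec, hcs⟩, hseq⟩
      obtain ⟨N, _, g, hg, hgs, hgK⟩ := k_of_cs hf hsec hcs hseq
      exact ⟨N, ‹_›, g, hg, hgs, hgK⟩
end

section
/- A Hausdorff topological space X is cs*-metrizable if and only if X has a σ-cs-finite cl₁-osed cs*-network, i.e. a family 𝒩 of subsets of X which is a countable union of cs-finite subfamilies and such that for every open set U ⊆ X and every sequence (x_n) of points of U converging to a point x ∈ U there is a set N ∈ 𝒩 with cl₁(N) ⊆ U that contains x_n for infinitely many n. -/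
open Filter Topology Set

universe u

/-- A family of sets is cs-finite if every convergent sequence together with its limit
meets only finitely many members of the family. -/
def CsFinite {X : Type u} [TopologicalSpace X] (𝓕 : Set (Set X)) : Prop :=
  ∀ (x : ℕ → X) (a : X), Tendsto x atTop (𝓝 a) →
    {N ∈ 𝓕 | (N ∩ (Set.range x ∪ {a})).Nonempty}.Finite

noncomputable def discMS (α : Type u) : MetricSpace α := by
  classical
  exact {
    dist := fun a b => if a = b then 0 else 1
    dist_self := fun a => by simp
    dist_comm := fun a b => by simp [eq_comm]
    dist_triangle := fun a b c => by
      by_cases hab : a = b <;> by_cases hbc : b = c <;> by_cases hac : a = c <;>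
        simp_all <;> norm_num
    eq_of_dist_eq_zero := fun {a b} h => by
      by_contra hne
      simp [hne] at h }

lemma discMS_eq {α : Type u} (a b : α) :
    letI := discMS α
    dist a b < 1 → a = b := by
  intro h
  by_contra hne
  exact absurd h (not_lt.2 (le_of_eq (if_neg hne).symm))

lemma seqClosure_mono' {α : Type u} [TopologicalSpace α] {s t : Set α} (h : s ⊆ t) :
    seqClosure s ⊆ seqClosure t := fun _ ⟨x, hx, hxt⟩ => ⟨x, fun n => h (hx n), hxt⟩

lemma clusterPt_eq_of_tendsto {α : Type u} [TopologicalSpace α] [T2Space α] {x : ℕ → α} {a b : α}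
    (h : MapClusterPt b atTop x) (hx : Tendsto x atTop (𝓝 a)) : b = a := by
  apply eq_of_nhds_neBot
  have : 𝓝 b ⊓ map x atTop ≤ 𝓝 b ⊓ 𝓝 a := inf_le_inf_left _ hx
  exact h.clusterPt.neBot.mono this

lemma exists_clusterPt_of_image_seq {X : Type u} [TopologicalSpace X] {M : Type u}
    [MetricSpace M] {s : X → M} (hs : CsStarContinuous s) {x : ℕ → X} {a : X}
    (hx : Tendsto x atTop (𝓝 a)) (y : ℕ → X) (hy : ∀ i, y i ∈ range x ∪ {a}) :
    ∃ p : M, MapClusterPt p atTop (fun i => s (y i)) := by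
  classical
  by_cases hinf : {i | y i = a}.Infinite
  · obtain ⟨φ, φmono, hφ⟩ :=
      extraction_of_frequently_atTop (Nat.frequently_atTop_iff_infinite.2 hinf)
    refine ⟨s a, MapClusterPt.of_comp φmono.tendsto_atTop ?_⟩
    rw [show ((fun i => s (y i)) ∘ φ) = fun _ => s a from funext fun i => by
      simp only [Function.comp_apply, hφ i]]
    exact tendsto_const_nhds.mapClusterPt
  · rw [Set.not_infinite] at hinf
    obtain ⟨I₀, hI₀⟩ : ∃ I₀ : ℕ, ∀ i ≥ I₀, y i ≠ a := by
      obtain ⟨B, hB⟩ := hinf.bddAbove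
      exact ⟨B + 1, fun i hi hia => by
        have := hB hia
        omega⟩
    set k : ℕ → ℕ := fun i => if h : ∃ m, x m = y i then h.choose else 0 with hk_def
    have hk : ∀ i ≥ I₀, x (k i) = y i := by
      intro i hi
      have hyr : y i ∈ range x := (hy i).resolve_right (hI₀ i hi)
      have h : ∃ m, x m = y i := hyr
      simp only [hk_def, dif_pos h]
      exact h.choose_spec
    by_cases hc : ∃ c, {i | I₀ ≤ i ∧ k i = c}.Infinite
    · obtain ⟨c, hc⟩ := hc
      obtain ⟨φ, φmono, hφ⟩ :=
        extraction_of_frequently_atTop (Nat.frequently_atTop_iff_infinite.2 hc)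
      refine ⟨s (x c), MapClusterPt.of_comp φmono.tendsto_atTop ?_⟩
      rw [show ((fun i => s (y i)) ∘ φ) = fun _ => s (x c) from funext fun i => by
        simp only [Function.comp_apply]
        rw [← hk _ (hφ i).1, (hφ i).2]]
      exact tendsto_const_nhds.mapClusterPt
    · push_neg at hc
      have hfreq : ∀ n, ∃ᶠ i in atTop, (I₀ ≤ i ∧ n ≤ k i) := by
        intro n
        rw [Nat.frequently_atTop_iff_infinite]
        have hsub : Set.Ici I₀ \ (⋃ c ∈ Finset.range n, {i | I₀ ≤ i ∧ k i = c})
            ⊆ {i | I₀ ≤ i ∧ n ≤ k i} := by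
          rintro i ⟨hi1, hi2⟩
          refine ⟨hi1, ?_⟩
          by_contra hlt
          exact hi2 (Set.mem_biUnion (Finset.mem_coe.2 (Finset.mem_range.2 (by omega)))
            ⟨hi1, rfl⟩)
        refine Set.Infinite.mono hsub ?_
        apply Set.Infinite.diff (Set.Ici_infinite I₀)
        exact Set.Finite.biUnion (Finset.range n).finite_toSet fun c _ => (hc c)
      obtain ⟨φ, φmono, hφ⟩ := extraction_forall_of_frequently hfreq
      have hten : Tendsto (fun i => x (k (φ i))) atTop (𝓝 a) :=
        hx.comp (tendsto_atTop_mono (fun i => (hφ i).2) tendsto_id)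
      obtain ⟨p, hp⟩ := hs _ a hten
      refine ⟨p, MapClusterPt.of_comp φmono.tendsto_atTop ?_⟩
      rw [show ((fun i => s (y i)) ∘ φ) = (fun i => s (x (k (φ i)))) from funext fun i => by
        simp only [Function.comp_apply]
        rw [hk _ (hφ i).1]]
      exact hp

lemma isCompact_closure_image {X : Type u} [TopologicalSpace X] {M : Type u} [MetricSpace M]
    {s : X → M} (hs : CsStarContinuous s) {x : ℕ → X} {a : X}
    (hx : Tendsto x atTop (𝓝 a)) :
    IsCompact (closure (s '' (range x ∪ {a}))) := by
  apply IsSeqCompact.isCompact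
  intro u hu
  have hex : ∀ i : ℕ, ∃ t ∈ s '' (range x ∪ {a}), dist (u i) t < 1 / (i + 1) := fun i =>
    Metric.mem_closure_iff.1 (hu i) _ (by positivity)
  choose t ht hdist using hex
  choose y hy hyt using ht
  obtain ⟨p, hp⟩ := exists_clusterPt_of_image_seq hs hx y hy
  rw [show (fun i => s (y i)) = t from funext hyt] at hp
  obtain ⟨ψ, ψmono, hψ⟩ := TopologicalSpace.FirstCountableTopology.tendsto_subseq hp
  refine ⟨p, ?_, ψ, ψmono, ?_⟩
  · refine mem_closure_of_tendsto hψ (Eventually.of_forall fun i => ?_)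
    exact ⟨y (ψ i), hy (ψ i), hyt (ψ i)⟩
  · have hd0 : Tendsto (fun i : ℕ => dist (t (ψ i)) (u (ψ i))) atTop (𝓝 0) := by
      apply squeeze_zero (fun i => dist_nonneg) (g := fun i : ℕ => 1 / (i + 1))
      · intro i
        rw [dist_comm]
        refine le_trans (hdist (ψ i)).le ?_
        have h0 : i ≤ ψ i := ψmono.le_apply
        have h1 : (i : ℝ) + 1 ≤ (ψ i : ℝ) + 1 := by exact_mod_cast by omega
        exact one_div_le_one_div_of_le (by positivity) h1
      · exact tendsto_one_div_add_atTop_nhds_zero_nat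
    exact Filter.Tendsto.congr_dist hψ hd0

/-- The family of all finite intersections of members of `⋃ m ≤ n, F m`. -/
def Fle {X : Type u} (F : ℕ → Set (Set X)) (n : ℕ) : Set (Set X) :=
  ⋃ m ∈ Set.Iic n, F m

def EE {X : Type u} (F : ℕ → Set (Set X)) (n : ℕ) : Type u :=
  {A : Set X // ∃ 𝒮 : Set (Set X), 𝒮.Finite ∧ 𝒮 ⊆ Fle F n ∧ A = ⋂₀ 𝒮}

def PredM {X : Type u} [TopologicalSpace X] (F : ℕ → Set (Set X))
    (c : ∀ n, EE F n) : Prop :=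
  ∃ x : X, (∀ n, x ∈ seqClosure (c n).1) ∧
    ∀ U : Set X, IsOpen U → x ∈ U → ∃ n, seqClosure (c n).1 ⊆ U

def MM {X : Type u} [TopologicalSpace X] (F : ℕ → Set (Set X)) : Type u :=
  {c : ∀ n, EE F n // PredM F c}

theorem converse_dir {X : Type u} [TopologicalSpace X] [T2Space X]
    (F : ℕ → Set (Set X)) (hF : ∀ n, CsFinite (F n))
    (hnet : ∀ U : Set X, IsOpen U → ∀ (x : ℕ → X) (a : X),
      Tendsto x atTop (𝓝 a) → a ∈ U → (∀ n, x n ∈ U) →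
      ∃ N ∈ ⋃ n, F n, seqClosure N ⊆ U ∧ {n | x n ∈ N}.Infinite) :
    CsStarMetrizable X := by
  classical
  letI instE : ∀ n, MetricSpace (EE F n) := fun n => discMS _
  letI instPi : MetricSpace (∀ n, EE F n) := PiCountable.metricSpace
  letI instM : MetricSpace (MM F) := Subtype.metricSpace
  -- finiteness facts
  have key : ∀ (n : ℕ) (x : ℕ → X) (a : X), Tendsto x atTop (𝓝 a) →
      {S | S ∈ Fle F n ∧ (S ∩ (range x ∪ {a})).Nonempty}.Finite := by
    intro n x a hx
    have hsub : {S | S ∈ Fle F n ∧ (S ∩ (range x ∪ {a})).Nonempty} ⊆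
        ⋃ m ∈ Set.Iic n, {S | S ∈ F m ∧ (S ∩ (range x ∪ {a})).Nonempty} := by
      rintro S ⟨hS1, hS2⟩
      obtain ⟨m, hm, hSm⟩ := Set.mem_iUnion₂.1 hS1
      exact Set.mem_iUnion₂.2 ⟨m, hm, hSm, hS2⟩
    exact Set.Finite.subset
      (Set.Finite.biUnion (Set.finite_Iic n) (fun m _ => hF m x a hx)) hsub
  have keyx : ∀ (n : ℕ) (x : X), {S | S ∈ Fle F n ∧ x ∈ S}.Finite := by
    intro n x
    apply (key n (fun _ => x) x tendsto_const_nhds).subset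
    rintro S ⟨hS1, hS2⟩
    exact ⟨hS1, ⟨x, hS2, Or.inl (mem_range_self 0)⟩⟩
  -- the section
  have hPs : ∀ (x : X) (n : ℕ), ∃ 𝒮 : Set (Set X), 𝒮.Finite ∧ 𝒮 ⊆ Fle F n ∧
      (⋂₀ {S | S ∈ Fle F n ∧ x ∈ S}) = ⋂₀ 𝒮 :=
    fun x n => ⟨{S | S ∈ Fle F n ∧ x ∈ S}, keyx n x, fun S hS => hS.1, rfl⟩
  let s' : X → ∀ n, EE F n := fun x n => ⟨⋂₀ {S | S ∈ Fle F n ∧ x ∈ S}, hPs x n⟩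
  have hmem_s' : ∀ (x : X) (n : ℕ), x ∈ (s' x n).1 :=
    fun x n => Set.mem_sInter.2 fun S hS => hS.2
  have hmin : ∀ (x : X) (n : ℕ) (N : Set X), N ∈ Fle F n → x ∈ N → (s' x n).1 ⊆ N :=
    fun x n N hN hxN => Set.sInter_subset_of_mem ⟨hN, hxN⟩
  -- point network
  have hnet' : ∀ (x : X) (U : Set X), IsOpen U → x ∈ U →
      ∃ m, ∃ N ∈ F m, x ∈ N ∧ seqClosure N ⊆ U := by
    intro x U hU hxU
    obtain ⟨N, hN, hNcl, hNinf⟩ := hnet U hU (fun _ => x) x tendsto_const_nhds hxU fun _ => hxU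
    obtain ⟨m, hm⟩ := Set.mem_iUnion.1 hN
    obtain ⟨i, hi⟩ := hNinf.nonempty
    exact ⟨m, N, hm, hi, hNcl⟩
  have hsii : ∀ (x : X) (U : Set X), IsOpen U → x ∈ U → ∃ n, seqClosure (s' x n).1 ⊆ U := by
    intro x U hU hxU
    obtain ⟨m, N, hNm, hxN, hNcl⟩ := hnet' x U hU hxU
    refine ⟨m, le_trans (seqClosure_mono' ?_) hNcl⟩
    exact hmin x m N (Set.mem_biUnion (Set.mem_Iic.2 le_rfl) hNm) hxN
  have hsx : ∀ x : X, PredM F (s' x) :=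
    fun x => ⟨x, fun n => subset_seqClosure (hmem_s' x n), hsii x⟩
  -- uniqueness of witness
  have uniq : ∀ (c : ∀ n, EE F n) (x x' : X),
      (∀ n, x' ∈ seqClosure (c n).1) →
      (∀ U : Set X, IsOpen U → x ∈ U → ∃ n, seqClosure (c n).1 ⊆ U) → x' = x := by
    intro c x x' hx' hx
    by_contra hne
    obtain ⟨U, V, hU, hV, hxU, hx'V, hUV⟩ := t2_separation (Ne.symm hne)
    obtain ⟨n, hn⟩ := hx U hU hxU
    exact Set.disjoint_left.1 hUV (hn (hx' n)) hx'V
  let f : MM F → X := fun c => c.2.choose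
  have hfspec : ∀ c : MM F, (∀ n, f c ∈ seqClosure (c.1 n).1) ∧
      ∀ U : Set X, IsOpen U → f c ∈ U → ∃ n, seqClosure (c.1 n).1 ⊆ U :=
    fun c => c.2.choose_spec
  let s : X → MM F := fun x => ⟨s' x, hsx x⟩
  have hsec : ∀ x, f (s x) = x := by
    intro x
    exact uniq (s' x) x (f (s x)) (hfspec (s x)).1 (hsii x)
  -- cylinder neighborhoods
  have hcyl : ∀ (c : ∀ n, EE F n) (n : ℕ), {d : ∀ n, EE F n | d n = c n} ∈ 𝓝 c := by
    intro c n
    rw [Metric.mem_nhds_iff]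
    refine ⟨(1/2) ^ n, by positivity, fun d hd => ?_⟩
    have hd' : dist d c < (1/2) ^ n := Metric.mem_ball.1 hd
    have hlt : dist d c < 2⁻¹ ^ (Encodable.encode n) := by
      rwa [Encodable.encode_nat, ← one_div]
    have h2 := PiCountable.dist_le_dist_pi_of_dist_lt hlt
    have h3 : dist (d n) (c n) < 1 :=
      lt_of_le_of_lt h2 (lt_of_lt_of_le hd' (by
        apply pow_le_one₀ <;> norm_num))
    exact discMS_eq _ _ h3
  -- continuity of f
  have hfc : Continuous f := by
    rw [continuous_iff_continuousAt]
    intro c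
    intro W hW
    obtain ⟨U, hUW, hU, hfcU⟩ := mem_nhds_iff.1 hW
    obtain ⟨n, hn⟩ := (hfspec c).2 U hU hfcU
    have hmem : Subtype.val ⁻¹' {d : ∀ n, EE F n | d n = c.1 n} ∈ 𝓝 c :=
      continuous_subtype_val.continuousAt.preimage_mem_nhds (hcyl c.1 n)
    rw [Filter.mem_map]
    filter_upwards [hmem] with d hd
    apply hUW
    have h1 := (hfspec d).1 n
    rw [hd] at h1
    exact hn h1
  -- conclusion
  refine ⟨MM F, instM, f, s, hfc, fun x => ⟨s x, hsec x⟩, hsec, ?_⟩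
  -- cs*-continuity of s
  intro x a hx
  have hVfin : ∀ n, (Set.range fun k => s' (x k) n).Finite := by
    intro n
    apply Set.Finite.of_finite_image (f := Subtype.val) _ Subtype.val_injective.injOn
    have him : (Subtype.val '' (Set.range fun k => s' (x k) n)) ⊆
        sInter '' {𝒮 | 𝒮 ⊆ {S | S ∈ Fle F n ∧ (S ∩ (range x ∪ {a})).Nonempty}} := by
      rintro A ⟨e, ⟨k, rfl⟩, rfl⟩
      exact ⟨{S | S ∈ Fle F n ∧ x k ∈ S},
        fun S hS => ⟨hS.1, ⟨x k, hS.2, Or.inl (mem_range_self k)⟩⟩, rfl⟩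
    exact (((key n x a hx).finite_subsets).image sInter).subset him
  have hC : IsCompact (Set.pi univ fun n => (Set.range fun k => s' (x k) n)) :=
    isCompact_univ_pi fun n => (hVfin n).isCompact
  obtain ⟨climax, -, φ, φmono, hφ⟩ := hC.tendsto_subseq
    (x := fun k => s' (x k)) (fun k => Set.mem_univ_pi.2 fun n => mem_range_self k)
  have hcoord : ∀ n, ∀ᶠ i in atTop, s' (x (φ i)) n = climax n := by
    intro n
    exact hφ.eventually (hcyl climax n)
  have hxφ : Tendsto (fun i => x (φ i)) atTop (𝓝 a) := hx.comp φmono.tendsto_atTop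
  have hi : ∀ n, a ∈ seqClosure (climax n).1 := by
    intro n
    obtain ⟨i₀, hi₀⟩ := eventually_atTop.1 (hcoord n)
    refine ⟨fun i => x (φ (i + i₀)), fun i => ?_, hxφ.comp (tendsto_add_atTop_nat i₀)⟩
    have h := hi₀ (i + i₀) (by omega)
    have hxin := hmem_s' (x (φ (i + i₀))) n
    rwa [h] at hxin
  have hii : ∀ U : Set X, IsOpen U → a ∈ U → ∃ n, seqClosure (climax n).1 ⊆ U := by
    intro U hU haU
    obtain ⟨i₁, hi₁⟩ := eventually_atTop.1 (hxφ.eventually (hU.mem_nhds haU))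
    obtain ⟨N, hN𝒩, hNcl, hNinf⟩ := hnet U hU (fun i => x (φ (i + i₁))) a
      (hxφ.comp (tendsto_add_atTop_nat i₁)) haU (fun i => hi₁ (i + i₁) (by omega))
    obtain ⟨m, hNm⟩ := Set.mem_iUnion.1 hN𝒩
    obtain ⟨i₂, hi₂⟩ := eventually_atTop.1 (hcoord m)
    obtain ⟨i, hiN, hgt⟩ := hNinf.exists_gt i₂
    have hc : climax m = s' (x (φ (i + i₁))) m := (hi₂ (i + i₁) (by omega)).symm
    refine ⟨m, ?_⟩
    rw [hc]
    refine le_trans (seqClosure_mono' ?_) hNcl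
    exact hmin _ m N (Set.mem_biUnion (Set.mem_Iic.2 le_rfl) hNm) hiN
  refine ⟨⟨climax, a, hi, hii⟩, MapClusterPt.of_comp φmono.tendsto_atTop ?_⟩
  apply Filter.Tendsto.mapClusterPt
  exact tendsto_subtype_rng.2 hφ

theorem forward_dir {X : Type u} [TopologicalSpace X] [T2Space X] (h : CsStarMetrizable X) :
    ∃ 𝒩 : Set (Set X),
      (∃ F : ℕ → Set (Set X), 𝒩 = ⋃ n, F n ∧ ∀ n, CsFinite (F n)) ∧
      (∀ U : Set X, IsOpen U → ∀ (x : ℕ → X) (a : X),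
        Tendsto x atTop (𝓝 a) → a ∈ U → (∀ n, x n ∈ U) →
        ∃ N ∈ 𝒩, seqClosure N ⊆ U ∧ {n | x n ∈ N}.Infinite) := by
  obtain ⟨M, instM, f, s, hf, hfsurj, hsec, hs⟩ := h
  have cov : ∀ n : ℕ, ∃ v : M → Set M, (∀ j, IsOpen (v j)) ∧ (⋃ j, v j) = univ ∧
      LocallyFinite v ∧ ∀ j, v j ⊆ Metric.ball j ((1/2) ^ n) := by
    intro n
    obtain ⟨v, hvo, hvc, hvlf, hvsub⟩ := precise_refinement
      (fun j : M => Metric.ball j ((1/2) ^ n)) (fun j => Metric.isOpen_ball)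
      (Set.iUnion_eq_univ_iff.2 fun j => ⟨j, Metric.mem_ball_self (by positivity)⟩)
    exact ⟨v, hvo, hvc, hvlf, hvsub⟩
  choose v hvopen hvcov hvlf hvsub using cov
  refine ⟨⋃ n, {N | ∃ j, N = s ⁻¹' (v n j)},
    ⟨fun n => {N | ∃ j, N = s ⁻¹' (v n j)}, rfl, ?_⟩, ?_⟩
  · -- cs-finiteness
    intro n x a hx
    have hTc := isCompact_closure_image hs hx
    have hfin := (hvlf n).finite_nonempty_inter_compact hTc
    apply Set.Finite.subset (hfin.image (fun j => s ⁻¹' (v n j)))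
    rintro N ⟨⟨j, rfl⟩, ⟨z, hz1, hz2⟩⟩
    exact ⟨j, ⟨s z, hz1, subset_closure ⟨z, hz2, rfl⟩⟩, rfl⟩
  · -- network
    intro U hU x a hx haU hxU
    obtain ⟨m, hm⟩ := hs x a hx
    have hfm : f m = a := by
      have h2 : MapClusterPt (f m) atTop (f ∘ fun n => s (x n)) :=
        hm.continuousAt_comp hf.continuousAt
      rw [show (f ∘ fun n => s (x n)) = x from funext fun n => hsec (x n)] at h2
      exact clusterPt_eq_of_tendsto h2 hx
    have hmU : m ∈ f ⁻¹' U := by rw [mem_preimage, hfm]; exact haU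
    obtain ⟨ε, εpos, hball⟩ := Metric.isOpen_iff.1 (hU.preimage hf) m hmU
    obtain ⟨n, hn⟩ : ∃ n : ℕ, (1/2 : ℝ) ^ n < ε / 3 :=
      exists_pow_lt_of_lt_one (by positivity) (by norm_num)
    obtain ⟨j, hj⟩ : ∃ j, m ∈ v n j := by
      have := Set.iUnion_eq_univ_iff.1 (hvcov n) m
      exact this
    refine ⟨s ⁻¹' (v n j), Set.mem_iUnion.2 ⟨n, j, rfl⟩, ?_, ?_⟩
    · intro z hz
      obtain ⟨w, hw, hwz⟩ := hz
      obtain ⟨p, hp⟩ := hs w z hwz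
      have hpmem : p ∈ closure (v n j) := by
        rw [mem_closure_iff_clusterPt]
        exact hp.clusterPt.mono (le_principal_iff.2
          (Filter.mem_map.2 (Eventually.of_forall fun i => hw i)))
      have hfp : f p = z := by
        have h2 : MapClusterPt (f p) atTop (f ∘ fun i => s (w i)) :=
          hp.continuousAt_comp hf.continuousAt
        rw [show (f ∘ fun i => s (w i)) = w from funext fun i => hsec (w i)] at h2
        exact clusterPt_eq_of_tendsto h2 hwz
      have hpU : p ∈ f ⁻¹' U := by
        apply hball
        have hpj : dist p j ≤ (1/2) ^ n := by
          have := (closure_mono (hvsub n j)).trans Metric.closure_ball_subset_closedBall hpmem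
          exact Metric.mem_closedBall.1 this
        have hmj : dist m j < (1/2) ^ n := Metric.mem_ball.1 (hvsub n j hj)
        have : dist p m ≤ dist p j + dist j m := dist_triangle p j m
        rw [Metric.mem_ball]
        calc dist p m ≤ dist p j + dist j m := dist_triangle p j m
          _ ≤ (1/2) ^ n + (1/2) ^ n := by
              rw [dist_comm j m]
              exact add_le_add hpj hmj.le
          _ < ε := by linarith
      rw [← hfp]; exact hpU
    · have hfreq := mapClusterPt_iff_frequently.1 hm (v n j) ((hvopen n j).mem_nhds hj)
      exact Nat.frequently_atTop_iff_infinite.1 hfreq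


/-- A Hausdorff space `X` is cs*-metrizable iff it has a σ-cs-finite
cl₁-osed cs*-network. -/
theorem stmt_8 {X : Type u} [TopologicalSpace X] [T2Space X] :
    CsStarMetrizable X ↔
      ∃ 𝒩 : Set (Set X),
        -- 𝒩 is a countable union of cs-finite subfamilies
        (∃ F : ℕ → Set (Set X), 𝒩 = ⋃ n, F n ∧ ∀ n, CsFinite (F n)) ∧
        -- 𝒩 is a cl₁-osed cs*-network
        (∀ U : Set X, IsOpen U → ∀ (x : ℕ → X) (a : X),
          Tendsto x atTop (𝓝 a) → a ∈ U → (∀ n, x n ∈ U) →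
          ∃ N ∈ 𝒩, seqClosure N ⊆ U ∧ {n | x n ∈ N}.Infinite) := by
  constructor
  · exact forward_dir
  · rintro ⟨𝒩, ⟨F, rfl, hF⟩, hnet⟩
    exact converse_dir F hF hnet
end

section
/- For a Hausdorff topological space X the following conditions are equivalent: (1) X is a Lašnev space, i.e. there is a metrizable space M and a continuous closed surjection f : M → X; (2) X is Fréchet–Urysohn and k*-metrizable; (3) X is Fréchet–Urysohn and cs*-metrizable. -/
open Filter Topology Set

universe u

/-- If a sequence has no cluster point, then the image of every index set is closed. -/
lemma isClosed_image_of_no_clusterPt {Z : Type*} [TopologicalSpace Z] [T1Space Z]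
    {u : ℕ → Z} (h : ∀ q : Z, ¬ MapClusterPt q atTop u) (I : Set ℕ) :
    IsClosed (u '' I) := by
  rw [← closure_subset_iff_isClosed]
  intro q hq
  have hbot : 𝓝 q ⊓ map u atTop = ⊥ := by
    by_contra hb
    exact h q ⟨hb⟩
  obtain ⟨U, hU, V, hV, hUV⟩ := Filter.inf_eq_bot_iff.mp hbot
  obtain ⟨N, hN⟩ := eventually_atTop.mp (mem_map.mp hV)
  obtain ⟨U₀, hU₀U, hU₀o, hqU₀⟩ := mem_nhds_iff.mp hU
  have hsub : U₀ ∩ u '' I ⊆ u '' (I ∩ Set.Iio N) := by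
    rintro y ⟨hyU, n, hnI, rfl⟩
    refine ⟨n, ⟨hnI, ?_⟩, rfl⟩
    by_contra hn
    simp only [Set.mem_Iio, not_lt] at hn
    have h1 : u n ∈ V := hN n (by simpa using hn)
    have : u n ∈ U ∩ V := ⟨hU₀U hyU, h1⟩
    simp [hUV] at this
  have h2 : q ∈ closure (u '' (I ∩ Set.Iio N)) := by
    have := IsOpen.inter_closure hU₀o (t := u '' I) ⟨hqU₀, hq⟩
    exact closure_mono hsub this
  have hfin : (u '' (I ∩ Set.Iio N)).Finite :=
    Set.Finite.image u ((Set.finite_Iio N).subset (Set.inter_subset_right))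
  rw [hfin.isClosed.closure_eq] at h2
  exact Set.image_mono Set.inter_subset_left h2

/-- In a metric space, if every sequence in `A` has a cluster point, then `closure A`
is compact. -/
lemma isCompact_closure_of_clusterPt {M : Type*} [MetricSpace M] {A : Set M}
    (h : ∀ u : ℕ → M, (∀ n, u n ∈ A) → ∃ q : M, MapClusterPt q atTop u) :
    IsCompact (closure A) := by
  apply IsSeqCompact.isCompact
  intro u hu
  have hv : ∀ n : ℕ, ∃ v ∈ A, dist (u n) v < 1 / (n + 1) := by
    intro n
    exact Metric.mem_closure_iff.mp (hu n) _ (by positivity)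
  choose v hvA hvd using hv
  obtain ⟨q, hq⟩ := h v hvA
  have hqA : q ∈ closure A := by
    apply mem_closure_iff_clusterPt.mpr
    apply hq.clusterPt.mono
    rw [le_principal_iff, mem_map]
    exact Eventually.of_forall hvA
  obtain ⟨ψ, hψ, hvψ⟩ := TopologicalSpace.FirstCountableTopology.tendsto_subseq hq
  refine ⟨q, hqA, ψ, hψ, ?_⟩
  rw [tendsto_iff_dist_tendsto_zero]
  have hd0 : Tendsto (fun n => dist (u (ψ n)) (v (ψ n))) atTop (𝓝 0) := by
    apply squeeze_zero (fun n => dist_nonneg) (fun n => (hvd (ψ n)).le)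
    have h1 : Tendsto (fun n : ℕ => 1 / ((n : ℝ) + 1)) atTop (𝓝 0) :=
      tendsto_one_div_add_atTop_nhds_zero_nat
    exact h1.comp hψ.tendsto_atTop
  have hd1 : Tendsto (fun n => dist (v (ψ n)) q) atTop (𝓝 0) := by
    rw [← tendsto_iff_dist_tendsto_zero]
    exact hvψ
  have := hd0.add hd1
  rw [add_zero] at this
  exact squeeze_zero (fun n => dist_nonneg) (fun n => dist_triangle _ _ _) this

/-- Key lemma for `(3) → (1)`: given a cs*-continuous section `s` of a continuous map `f`
from a metric space onto a Fréchet–Urysohn Hausdorff space, any sequence in the closure of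
the range of `s` whose images converge (nontrivially) has a cluster point. -/
lemma exists_clusterPt_of_csStar {X M : Type u} [TopologicalSpace X] [T2Space X]
    [FrechetUrysohnSpace X] [MetricSpace M]
    {f : M → X} {s : X → M} (hf : Continuous f) (hsec : ∀ x, f (s x) = x)
    (hcs : CsStarContinuous s)
    {x : X} {xs : ℕ → X} (hxs : Tendsto xs atTop (𝓝 x)) (hne : ∀ j, xs j ≠ x)
    {m : ℕ → M} (hmem : ∀ j, m j ∈ closure (Set.range s)) (hfm : ∀ j, f (m j) = xs j) :
    ∃ q : M, MapClusterPt q atTop m := by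
  by_contra hno
  push_neg at hno
  -- separate each xs j from x
  have hsep : ∀ j, ∃ V : Set X, ∃ W : Set X,
      IsOpen V ∧ IsOpen W ∧ xs j ∈ V ∧ x ∈ W ∧ Disjoint V W := by
    intro j
    obtain ⟨V, W, hVo, hWo, h1, h2, h3⟩ := t2_separation (hne j)
    exact ⟨V, W, hVo, hWo, h1, h2, h3⟩
  choose V W hVo hWo hxsV hxW hVW using hsep
  -- choose radii
  have hrad : ∀ j : ℕ, ∃ r : ℝ, 0 < r ∧ r ≤ 1 / ((j : ℝ) + 1) ∧
      Metric.ball (m j) r ⊆ f ⁻¹' (V j) := by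
    intro j
    have h1 : f ⁻¹' (V j) ∈ 𝓝 (m j) :=
      hf.continuousAt.preimage_mem_nhds ((hVo j).mem_nhds (by rw [hfm]; exact hxsV j))
    obtain ⟨ε, hε, hball⟩ := Metric.mem_nhds_iff.mp h1
    refine ⟨min ε (1 / ((j : ℝ) + 1)), by positivity, min_le_right _ _, ?_⟩
    exact (Metric.ball_subset_ball (min_le_left _ _)).trans hball
  choose r hr0 hr1 hrball using hrad
  set A := ⋃ j, s ⁻¹' (Metric.ball (m j) (r j)) with hA
  have hxsA : ∀ j, xs j ∈ closure (s ⁻¹' Metric.ball (m j) (r j)) := by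
    intro j
    rw [mem_closure_iff]
    intro O hO hxsO
    have hmO : m j ∈ Metric.ball (m j) (r j) ∩ f ⁻¹' O :=
      ⟨Metric.mem_ball_self (hr0 j), by rw [Set.mem_preimage, hfm]; exact hxsO⟩
    have hne' : ((Metric.ball (m j) (r j) ∩ f ⁻¹' O) ∩ Set.range s).Nonempty :=
      mem_closure_iff.mp (hmem j) _ (Metric.isOpen_ball.inter (hO.preimage hf)) hmO
    obtain ⟨p, ⟨hp1, hp2⟩, z, rfl⟩ := hne'
    refine ⟨z, ?_, hp1⟩
    rw [Set.mem_preimage, hsec] at hp2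
    exact hp2
  have hxA : x ∈ closure A := by
    have h1 : ∀ j, xs j ∈ closure A :=
      fun j => closure_mono (Set.subset_iUnion _ j) (hxsA j)
    have h2 : x ∈ closure (closure A) :=
      mem_closure_of_tendsto hxs (Eventually.of_forall h1)
    rwa [closure_closure] at h2
  obtain ⟨w, hwA, hwx⟩ := mem_closure_iff_seq_limit.mp hxA
  choose jj hjj using fun i => Set.mem_iUnion.mp (hwA i)
  obtain ⟨q, hq⟩ := hcs w x hwx
  -- each fiber of jj is finite
  have hfib : ∀ J, {i | jj i = J}.Finite := by
    intro J
    by_contra hinf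
    have hfreq : ∃ᶠ i in atTop, w i ∈ V J := by
      rw [Nat.frequently_atTop_iff_infinite]
      apply Set.Infinite.mono ?_ hinf
      intro i hi
      show w i ∈ V J
      have h1 : s (w i) ∈ Metric.ball (m J) (r J) := by
        have := hjj i
        rwa [hi] at this
      have h2 := hrball J h1
      rwa [Set.mem_preimage, hsec] at h2
    have hev : ∀ᶠ i in atTop, w i ∈ W J := hwx ((hWo J).mem_nhds (hxW J))
    obtain ⟨i, h1, h2⟩ := (hfreq.and_eventually hev).exists
    exact Set.disjoint_left.mp (hVW J) h1 h2
  -- q is a cluster point of m : contradiction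
  apply hno q
  rw [mapClusterPt_iff_frequently]
  intro U hU
  obtain ⟨ε, hε, hball⟩ := Metric.mem_nhds_iff.mp hU
  rw [frequently_atTop]
  intro N
  set T := max N (Nat.ceil (2 / ε)) with hT
  have hq2 : ∃ᶠ i in atTop, s (w i) ∈ Metric.ball q (ε / 2) :=
    mapClusterPt_iff_frequently.mp hq _ (Metric.ball_mem_nhds q (by positivity))
  have hbad : {i | jj i ≤ T}.Finite := by
    apply Set.Finite.subset ((Set.finite_Iic T).biUnion (fun J _ => hfib J))
    intro i hi
    exact Set.mem_biUnion hi rfl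
  have hev2 : ∀ᶠ i in atTop, ¬ (jj i ≤ T) := by
    have := hbad.eventually_cofinite_notMem
    rwa [Nat.cofinite_eq_atTop] at this
  obtain ⟨i, hi1, hi2⟩ := (hq2.and_eventually hev2).exists
  push_neg at hi2
  refine ⟨jj i, le_of_lt (lt_of_le_of_lt (le_max_left _ _) hi2), ?_⟩
  apply hball
  have d1 : dist (m (jj i)) (s (w i)) < r (jj i) := by
    have h0 := hjj i
    rw [Set.mem_preimage, Metric.mem_ball] at h0
    rw [dist_comm]
    exact h0
  have d2 : dist (s (w i)) q < ε / 2 := Metric.mem_ball.mp hi1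
  have d3 : r (jj i) ≤ 1 / (jj i + 1) := hr1 _
  have d4 : (1 : ℝ) / (jj i + 1) < ε / 2 := by
    have hc : (2 / ε : ℝ) ≤ Nat.ceil (2 / ε) := Nat.le_ceil _
    have hc2 : ((Nat.ceil (2 / ε) : ℕ) : ℝ) ≤ (T : ℝ) := by
      exact_mod_cast le_max_right N (Nat.ceil (2 / ε))
    have hc3 : (T : ℝ) < (jj i : ℝ) := by exact_mod_cast hi2
    have hpos : (0 : ℝ) < (jj i : ℝ) + 1 := by positivity
    rw [div_lt_div_iff₀ hpos (by norm_num : (0:ℝ) < 2)]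
    have h2e : (2 / ε : ℝ) < (jj i : ℝ) + 1 := by linarith
    have := (div_lt_iff₀ hε).mp h2e
    linarith
  have dtri : dist (m (jj i)) q ≤ dist (m (jj i)) (s (w i)) + dist (s (w i)) q :=
    dist_triangle _ _ _
  rw [Metric.mem_ball]
  calc dist (m (jj i)) q ≤ dist (m (jj i)) (s (w i)) + dist (s (w i)) q := dtri
    _ < r (jj i) + ε / 2 := by linarith
    _ ≤ 1 / (jj i + 1) + ε / 2 := by linarith
    _ < ε / 2 + ε / 2 := by linarith
    _ = ε := by ring

/-- For a Hausdorff space `X` the following are equivalent: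
(1) `X` is a Lašnev space (a closed continuous image of a metrizable space);
(2) `X` is Fréchet–Urysohn and k*-metrizable;
(3) `X` is Fréchet–Urysohn and cs*-metrizable. -/
theorem stmt_10 {X : Type u} [TopologicalSpace X] [T2Space X] :
    List.TFAE
      [ ∃ (M : Type u) (_ : MetricSpace M) (f : M → X),
          Continuous f ∧ IsClosedMap f ∧ Function.Surjective f,
        FrechetUrysohnSpace X ∧ KStarMetrizable X,
        FrechetUrysohnSpace X ∧ CsStarMetrizable X ] := by
  tfae_have 1 → 2 := by
    rintro ⟨M, hM, f, hf, hclosed, hsurj⟩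
    letI := hM
    have hFU : FrechetUrysohnSpace X := by
      constructor
      intro A a ha
      have key : closure A ⊆ f '' closure (f ⁻¹' A) := by
        apply closure_minimal ?_ (hclosed _ isClosed_closure)
        intro z hz
        obtain ⟨mm, rfl⟩ := hsurj z
        exact ⟨mm, subset_closure hz, rfl⟩
      obtain ⟨mm, hmm, rfl⟩ := key ha
      obtain ⟨useq, huA, hulim⟩ := mem_closure_iff_seq_limit.mp hmm
      exact ⟨fun n => f (useq n), fun n => huA n, ((hf.tendsto mm).comp hulim)⟩
    refine ⟨hFU, M, hM, f, Function.surjInv hsurj, hf, hsurj,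
      fun x => Function.surjInv_eq hsurj x, ?_⟩
    intro K hK
    apply isCompact_closure_of_clusterPt
    intro u hu
    by_contra hno
    push_neg at hno
    choose xk hxkK hxku using fun n => hu n
    have hfu : ∀ n, f (u n) = xk n := by
      intro n
      rw [← hxku n, Function.surjInv_eq hsurj]
    -- every subset of range xk is closed
    have hSclosed : ∀ S : Set X, S ⊆ Set.range xk → IsClosed S := by
      intro S hS
      have h1 : S = xk '' (xk ⁻¹' S) := by
        rw [Set.image_preimage_eq_inter_range, Set.inter_eq_left.mpr hS]
      rw [h1]
      have h2 : xk '' (xk ⁻¹' S) = f '' (u '' (xk ⁻¹' S)) := by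
        rw [Set.image_image]
        apply Set.image_congr
        intro n _
        exact (hfu n).symm
      rw [h2]
      exact hclosed _ (isClosed_image_of_no_clusterPt hno _)
    by_cases hYfin : (Set.range xk).Finite
    · -- some value repeats infinitely often, giving a cluster point
      haveI := hYfin.to_subtype
      obtain ⟨y₀, hy₀⟩ := Finite.exists_infinite_fiber
        (fun n => (⟨xk n, Set.mem_range_self n⟩ : Set.range xk))
      apply hno (Function.surjInv hsurj (y₀ : X))
      rw [mapClusterPt_iff_frequently]
      intro U hU
      rw [Nat.frequently_atTop_iff_infinite]
      apply Set.Infinite.mono ?_ (Set.infinite_coe_iff.mp hy₀)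
      intro n hn
      have h1 : xk n = (y₀ : X) := by
        have := hn
        simp only [Set.mem_preimage, Set.mem_singleton_iff] at this
        exact congrArg Subtype.val this
      show u n ∈ U
      rw [← hxku n, h1]
      exact mem_of_mem_nhds hU
    · -- an infinite closed discrete subset of a compact set: contradiction
      have hdisc : ∀ a : Set.range xk, IsOpen {a} := by
        intro a
        have h1 : IsClosed (Set.range xk \ {(a : X)}) :=
          hSclosed _ Set.diff_subset
        have h2 : ({a} : Set (Set.range xk)) =
            Subtype.val ⁻¹' ((Set.range xk \ {(a : X)})ᶜ) := by
          ext z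
          simp [Subtype.ext_iff, z.2]
        rw [h2]
        exact h1.isOpen_compl.preimage continuous_subtype_val
      haveI hdt : DiscreteTopology (Set.range xk) := discreteTopology_iff_isOpen_singleton.mpr hdisc
      have hYcomp : IsCompact (Set.range xk) := by
        apply hK.of_isClosed_subset (hSclosed _ subset_rfl)
        rintro _ ⟨n, rfl⟩
        exact hxkK n
      exact hYfin (hYcomp.finite (isDiscrete_iff_discreteTopology.mpr hdt))
  tfae_have 2 → 3 := by
    rintro ⟨hFU, M, hM, f, s, hf, hsurj, hsec, hcpt⟩
    letI := hM
    refine ⟨hFU, M, hM, f, s, hf, hsurj, hsec, ?_⟩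
    intro y a hy
    have hKc : IsCompact (insert a (Set.range y)) := hy.isCompact_insert_range
    have hcl := hcpt _ hKc
    have hle : map (fun n => s (y n)) atTop ≤ 𝓟 (closure (s '' insert a (Set.range y))) := by
      rw [le_principal_iff, mem_map]
      apply Eventually.of_forall
      intro n
      exact subset_closure ⟨y n, Or.inr (Set.mem_range_self n), rfl⟩
    obtain ⟨x, -, hx⟩ := hcl.exists_mapClusterPt hle
    exact ⟨x, hx⟩
  tfae_have 3 → 1 := by
    rintro ⟨hFU, M, hM, f, s, hf, hsurj, hsec, hcs⟩
    letI := hM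
    refine ⟨{m : M // m ∈ closure (Set.range s)}, inferInstance, fun n => f n.1,
      hf.comp continuous_subtype_val, ?_, ?_⟩
    · intro C hC
      rw [← closure_subset_iff_isClosed]
      intro x hx
      by_cases hxg : x ∈ (fun n : {m : M // m ∈ closure (Set.range s)} => f n.1) '' C
      · exact hxg
      obtain ⟨xs, hxsC, hxs⟩ := mem_closure_iff_seq_limit.mp hx
      choose c hcC hcx using hxsC
      have hne : ∀ j, xs j ≠ x := by
        intro j h
        exact hxg (h ▸ ⟨c j, hcC j, hcx j⟩)
      have hmem : ∀ j, (c j : M) ∈ closure (Set.range s) := fun j => (c j).2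
      obtain ⟨q, hq⟩ := exists_clusterPt_of_csStar hf hsec hcs hxs hne hmem hcx
      have hCM : IsClosed (Subtype.val '' C) :=
        (IsClosed.isClosedMap_subtype_val isClosed_closure) C hC
      have hqC : q ∈ Subtype.val '' C := by
        rw [← hCM.closure_eq]
        apply mem_closure_iff_clusterPt.mpr
        apply hq.clusterPt.mono
        rw [le_principal_iff, mem_map]
        apply Eventually.of_forall
        intro n
        exact Set.mem_image_of_mem _ (hcC n)
      obtain ⟨c₀, hc₀C, hc₀⟩ := hqC
      have h1 : MapClusterPt (f q) atTop (f ∘ fun j => (c j : M)) :=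
        hq.continuousAt_comp hf.continuousAt
      have h2 : MapClusterPt (f q) atTop xs := by
        have : (f ∘ fun j => (c j : M)) = xs := funext hcx
        rwa [this] at h1
      have hfq : f q = x := eq_of_nhds_neBot (h2.clusterPt.mono hxs)
      exact ⟨c₀, hc₀C, by show f (c₀ : M) = x; rw [hc₀, hfq]⟩
    · intro x
      exact ⟨⟨s x, subset_closure (Set.mem_range_self x)⟩, hsec x⟩
  tfae_finish
end

section
/- Every cs*-metrizable Hausdorff topological space X is monotonically sequentially normal: there is a function D assigning to each pair (H, K) of disjoint closed subsets of X a set D(H,K) ⊆ X such that cl₁(D(H,K)) ∩ K = ∅, cl₁(X \ D(H,K)) ∩ H = ∅, and D(H,K) ⊆ D(H',K') whenever H ⊆ H' and K ⊇ K' (for disjoint closed pairs (H,K) and (H',K')). -/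
open Filter Topology Set

universe u

/-- Every cs*-metrizable Hausdorff space is monotonically sequentially
normal. -/
theorem stmt_13 {X : Type u} [TopologicalSpace X] [T2Space X]
    (h : CsStarMetrizable X) :
    ∃ D : Set X → Set X → Set X,
      (∀ H K : Set X, IsClosed H → IsClosed K → Disjoint H K →
        seqClosure (D H K) ∩ K = ∅ ∧ seqClosure ((D H K)ᶜ) ∩ H = ∅) ∧
      (∀ H K H' K' : Set X,
        IsClosed H → IsClosed K → Disjoint H K →
        IsClosed H' → IsClosed K' → Disjoint H' K' →
        H ⊆ H' → K' ⊆ K → D H K ⊆ D H' K') := by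
  obtain ⟨M, _, f, s, hf, hfs, hsec, hcs⟩ := h
  refine ⟨fun H K => {x | EMetric.infEdist (s x) (f ⁻¹' H) < EMetric.infEdist (s x) (f ⁻¹' K)},
    ?_, ?_⟩
  · intro H K hH hK hdisj
    -- key: for a sequence u in X converging to x with cluster machinery
    have key : ∀ (u : ℕ → X) (x : X) (S : Set X), IsClosed S → x ∈ S →
        Tendsto u atTop (𝓝 x) →
        ∀ T : Set X, IsClosed T →
        (∀ᶠ n in atTop, EMetric.infEdist (s (u n)) (f ⁻¹' T) ≤
          EMetric.infEdist (s (u n)) (f ⁻¹' S)) → x ∈ T := by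
      intro u x S hS hxS hu T hT hle
      obtain ⟨m, hm⟩ := hcs u x hu
      obtain ⟨ψ, hψ, hψt⟩ := TopologicalSpace.FirstCountableTopology.tendsto_subseq hm
      have hfm : f m = x := by
        have h1 : Tendsto (fun k => u (ψ k)) atTop (𝓝 (f m)) := by
          have := (hf.tendsto m).comp hψt
          simp only [Function.comp_def] at this
          simpa only [hsec] using this
        exact tendsto_nhds_unique h1 (hu.comp hψ.tendsto_atTop)
      have hmS : m ∈ f ⁻¹' S := by simp [hfm, hxS]
      -- infEdist (s (u (ψ k))) (f⁻¹' S) ≤ edist (s (u (ψ k))) m → 0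
      have h0 : Tendsto (fun k => edist (s (u (ψ k))) m) atTop (𝓝 0) := by
        have := (hψt.edist tendsto_const_nhds (b := m))
        simpa using this
      have hTz : Tendsto (fun k => EMetric.infEdist (s (u (ψ k))) (f ⁻¹' T)) atTop (𝓝 0) := by
        refine tendsto_of_tendsto_of_tendsto_of_le_of_le' tendsto_const_nhds h0
          (Eventually.of_forall fun k => zero_le) ?_
        filter_upwards [hψ.tendsto_atTop.eventually hle] with k hk
        exact hk.trans (EMetric.infEdist_le_edist_of_mem hmS)
      have hcont : Tendsto (fun k => EMetric.infEdist (s (u (ψ k))) (f ⁻¹' T)) atTop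
          (𝓝 (EMetric.infEdist m (f ⁻¹' T))) :=
        (EMetric.continuous_infEdist.tendsto m).comp hψt
      have hz : EMetric.infEdist m (f ⁻¹' T) = 0 := tendsto_nhds_unique hcont hTz
      have : m ∈ closure (f ⁻¹' T) := EMetric.mem_closure_iff_infEdist_zero.2 hz
      rw [(hT.preimage hf).closure_eq] at this
      simpa [hfm] using this
    constructor
    · ext x
      simp only [mem_inter_iff, mem_empty_iff_false, iff_false, not_and]
      rintro ⟨u, hu, hul⟩ hxK
      have hxH : x ∈ H := key u x K hK hxK hul H hH
        (Eventually.of_forall fun n => (hu n).le)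
      exact absurd hxK (disjoint_left.1 hdisj hxH)
    · ext x
      simp only [mem_inter_iff, mem_empty_iff_false, iff_false, not_and]
      rintro ⟨u, hu, hul⟩ hxH
      have hxK : x ∈ K := key u x H hH hxH hul K hK
        (Eventually.of_forall fun n => not_lt.1 (hu n))
      exact absurd hxK (disjoint_left.1 hdisj hxH)
  · intro H K H' K' _ _ _ _ _ _ hHH hKK x hx
    exact lt_of_le_of_lt (EMetric.infEdist_anti (preimage_mono hHH))
      (lt_of_lt_of_le hx (EMetric.infEdist_anti (preimage_mono hKK)))
end

section
/- For each cs*-metrizable Hausdorff topological space X there is a function G assigning to each n ∈ ℕ and each closed set F ⊆ X a set G(n,F) ⊆ X such that: each G(n,F) is a sequential barrier for F, i.e. for every sequence (x_k) in X converging to a point of F all but finitely many x_k lie in G(n,F); F = ⋂_{n∈ℕ} G(n,F) for every closed F; and G(n,F) ⊆ G(n,K) whenever F ⊆ K are closed sets. -/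
open Filter Topology Set

universe u

/-- For each cs*-metrizable Hausdorff space there is a monotone
semi-stratification by sequential barriers. -/
theorem stmt_14 {X : Type u} [TopologicalSpace X] [T2Space X]
    (h : CsStarMetrizable X) :
    ∃ G : ℕ → Set X → Set X,
      -- each G n F is a sequential barrier for the closed set F
      (∀ (n : ℕ) (F : Set X), IsClosed F →
        ∀ (x : ℕ → X) (a : X), a ∈ F → Tendsto x atTop (𝓝 a) →
          ∀ᶠ k in atTop, x k ∈ G n F) ∧
      -- F is the intersection of the G n F
      (∀ F : Set X, IsClosed F → F = ⋂ n, G n F) ∧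
      -- monotonicity
      (∀ (n : ℕ) (F K : Set X), IsClosed F → IsClosed K → F ⊆ K →
        G n F ⊆ G n K) := by
  obtain ⟨M, hM, f, s, hf, hsurj, hsec, hcs⟩ := h
  letI := hM
  refine ⟨fun n F => {x | F.Nonempty ∧ Metric.infDist (s x) (f ⁻¹' F) < 1 / (n + 1)},
    ?_, ?_, ?_⟩
  · intro n F _ x a haF hx
    by_contra hcon
    rw [Filter.not_eventually] at hcon
    obtain ⟨φ, hφmono, hφ⟩ := Filter.extraction_of_frequently_atTop hcon
    have hxφ : Tendsto (x ∘ φ) atTop (𝓝 a) := hx.comp hφmono.tendsto_atTop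
    obtain ⟨m, hm⟩ := hcs (x ∘ φ) a hxφ
    have hfm : Tendsto (fun j => f (s (x (φ j)))) atTop (𝓝 a) := by
      simpa [hsec, Function.comp_def] using hxφ
    have hcl : MapClusterPt (f m) atTop (fun j => f (s (x (φ j)))) :=
      hm.continuousAt_comp hf.continuousAt
    have hfma : f m = a := by
      by_contra hne
      obtain ⟨U, V, hU, hV, hmU, haV, hUV⟩ := t2_separation hne
      have h1 : ∀ᶠ j in atTop, f (s (x (φ j))) ∈ V := hfm.eventually (hV.mem_nhds haV)
      have h2 : ∃ᶠ j in atTop, f (s (x (φ j))) ∈ U :=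
        mapClusterPt_iff_frequently.mp hcl U (hU.mem_nhds hmU)
      obtain ⟨j, hjU, hjV⟩ := (h2.and_eventually h1).exists
      exact absurd (hUV.le_bot ⟨hjU, hjV⟩) (Set.notMem_empty _)
    have hmF : m ∈ f ⁻¹' F := by simp [Set.mem_preimage, hfma, haF]
    have hball : ∃ᶠ j in atTop, s ((x ∘ φ) j) ∈ Metric.ball m (1 / (n + 1)) :=
      mapClusterPt_iff_frequently.mp hm _ (Metric.ball_mem_nhds m (by positivity))
    obtain ⟨j, hj⟩ := hball.exists
    refine hφ j ⟨⟨a, haF⟩, ?_⟩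
    calc Metric.infDist (s (x (φ j))) (f ⁻¹' F) ≤ dist (s (x (φ j))) m :=
          Metric.infDist_le_dist_of_mem hmF
      _ < 1 / (n + 1) := hj
  · intro F hF
    ext x
    simp only [Set.mem_iInter, Set.mem_setOf_eq]
    constructor
    · intro hxF n
      refine ⟨⟨x, hxF⟩, ?_⟩
      have : Metric.infDist (s x) (f ⁻¹' F) = 0 :=
        Metric.infDist_zero_of_mem (by simp [Set.mem_preimage, hsec, hxF])
      rw [this]; positivity
    · intro hall
      have hne : F.Nonempty := (hall 0).1
      have hd : Metric.infDist (s x) (f ⁻¹' F) = 0 := by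
        have hnn := Metric.infDist_nonneg (x := s x) (s := f ⁻¹' F)
        by_contra hne0
        have hpos : 0 < Metric.infDist (s x) (f ⁻¹' F) := lt_of_le_of_ne hnn (Ne.symm hne0)
        obtain ⟨n, hn⟩ := exists_nat_one_div_lt hpos
        exact absurd ((hall n).2) (not_lt.mpr hn.le)
      have hclosed : IsClosed (f ⁻¹' F) := hF.preimage hf
      obtain ⟨y, hyF⟩ := hne
      obtain ⟨m0, hm0⟩ := hsurj y
      have hmem : s x ∈ f ⁻¹' F :=
        (hclosed.mem_iff_infDist_zero ⟨m0, by simp [Set.mem_preimage, hm0, hyF]⟩).mpr hd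
      have := hmem
      rw [Set.mem_preimage, hsec] at this
      exact this
  · intro n F K _ _ hFK x ⟨hne, hd⟩
    refine ⟨hne.mono hFK, lt_of_le_of_lt ?_ hd⟩
    obtain ⟨y, hyF⟩ := hne
    exact Metric.infDist_le_infDist_of_subset (Set.preimage_mono hFK)
      ⟨s y, by simp [Set.mem_preimage, hsec, hyF]⟩
end
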